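/- arXiv:1611.08370 — 7 statements merged into one kernel-verified Lean document; each statement's English description precedes it below -/
import Mathlib

section
/- Let σ be a permutation of Fin n. Then for every s ∈ ℂ with |s| < 1, exp(∑_{m=1}^{∞} (#Fix(σ^m)/m) · s^m) · det(I_n − s·P_σ) = 1; that is, the zeta function ζ_σ(s) = exp(∑_{m≥1} #Fix(σ^m)/m · s^m) has the determinant expression ζ_σ(s) = det(I_n − P_σ·s)^{−1}. -/
open Matrix

section Helpers

open Finset Equiv

lemma hasSum_geom_log {s : ℂ} (hs : ‖s‖ < 1) :
    HasSum (fun m : ℕ => s ^ (m + 1) / (m + 1)) (-Complex.log (1 - s)) := by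
  have h := Complex.hasSum_taylorSeries_neg_log hs
  have h1 := (hasSum_nat_add_iff' (f := fun n : ℕ => s ^ n / n) 1).mpr h
  simp only [Finset.range_one, Finset.sum_singleton, pow_zero, Nat.cast_zero, div_zero,
    sub_zero] at h1
  convert h1 using 2 with m
  · rfl
  push_cast
  ring

lemma hasSum_dvd_log {s : ℂ} (hs : ‖s‖ < 1) {l : ℕ} (hl : 0 < l) :
    HasSum (fun m : ℕ => (if l ∣ (m + 1) then (l : ℂ) else 0) / (m + 1) * s ^ (m + 1))
      (-Complex.log (1 - s ^ l)) := by
  have hz : ‖s ^ l‖ < 1 := by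
    rw [norm_pow]
    exact pow_lt_one₀ (norm_nonneg s) hs hl.ne'
  have h := hasSum_geom_log hz
  set g : ℕ → ℂ := fun m => (if l ∣ (m + 1) then (l : ℂ) else 0) / (m + 1) * s ^ (m + 1) with hg
  set e : ℕ → ℕ := fun k => l * k + (l - 1) with he
  have hek : ∀ k, e k + 1 = l * (k + 1) := by
    intro k
    have : l * (k + 1) = l * k + l := by ring
    simp only [he]
    omega
  have hinj : Function.Injective e := by
    intro a b hab
    simp only [he, Nat.add_right_cancel_iff] at hab
    exact Nat.eq_of_mul_eq_mul_left hl hab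
  have hzero : ∀ m, m ∉ Set.range e → g m = 0 := by
    intro m hm
    have hd : ¬ (l ∣ m + 1) := by
      intro ⟨c, hc⟩
      apply hm
      have hc0 : c ≠ 0 := by rintro rfl; simp at hc
      obtain ⟨c', rfl⟩ : ∃ c', c = c' + 1 := ⟨c - 1, by omega⟩
      refine ⟨c', ?_⟩
      have h2 : l * (c' + 1) = l * c' + l := by ring
      have h3 := hek c'
      omega
    rw [hg]
    simp only [if_neg hd, zero_div, zero_mul]
  rw [← Function.Injective.hasSum_iff hinj hzero]
  convert h using 1
  funext k
  have hd : l ∣ (e k + 1) := ⟨k + 1, hek k⟩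
  simp only [Function.comp, hg, if_pos hd]
  have hcast : ((e k : ℕ) : ℂ) + 1 = (l : ℂ) * ((k : ℂ) + 1) := by
    exact_mod_cast congrArg (Nat.cast (R := ℂ)) (hek k)
  rw [hcast, ← pow_mul, ← hek k]
  have hl0 : (l : ℂ) ≠ 0 := Nat.cast_ne_zero.mpr hl.ne'
  have hk0 : ((k : ℂ) + 1) ≠ 0 := Nat.cast_add_one_ne_zero k
  field_simp

lemma perm_matrix_entry {n : ℕ} (σ : Equiv.Perm (Fin n)) (s : ℂ) (i j : Fin n) :
    ((1 : Matrix (Fin n) (Fin n) ℂ) - s • σ.permMatrix ℂ) i j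
      = (if i = j then (1:ℂ) else 0) - s * (if σ i = j then 1 else 0) := by
  simp [Matrix.sub_apply, Matrix.one_apply, PEquiv.toMatrix_apply,
    Equiv.toPEquiv_apply, mul_ite]

lemma good_perm_eq {n : ℕ} {c τ : Equiv.Perm (Fin n)} (hc : c.IsCycle)
    (hall : ∀ i, τ i = i ∨ τ i = c⁻¹ i) (hτ1 : τ ≠ 1) : τ = c⁻¹ := by
  have hx : ∃ x, τ x ≠ x := by
    by_contra hxx
    push_neg at hxx
    exact hτ1 (Equiv.ext hxx)
  obtain ⟨x, hxne⟩ := hx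
  have hxc : τ x = c⁻¹ x := (hall x).resolve_left hxne
  have hxsupp : x ∈ c.support := by
    rw [Equiv.Perm.mem_support]
    intro hcx
    apply hxne
    rw [hxc, Equiv.Perm.inv_eq_iff_eq]
    exact hcx.symm
  have hstep : ∀ z, z ∈ c.support → τ z = c⁻¹ z → τ (c⁻¹ z) = c⁻¹ (c⁻¹ z) := by
    intro z hz hzval
    rcases hall (c⁻¹ z) with h1 | h2
    · exfalso
      have h3 : τ (c⁻¹ z) = τ z := by rw [h1, hzval]
      have h4 := τ.injective h3
      rw [Equiv.Perm.mem_support] at hz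
      apply hz
      conv_lhs => rw [← h4]
      exact (show c (c⁻¹ z) = z from Equiv.apply_symm_apply c z)
    · exact h2
  have hiter : ∀ m : ℕ, τ ((c⁻¹ ^ m) x) = c⁻¹ ((c⁻¹ ^ m) x) ∧ (c⁻¹ ^ m) x ∈ c.support := by
    intro m
    induction m with
    | zero =>
      simp only [pow_zero, Equiv.Perm.coe_one, id_eq]
      exact ⟨hxc, hxsupp⟩
    | succ m ih =>
      obtain ⟨ih1, ih2⟩ := ih
      have hmem : c⁻¹ ((c⁻¹ ^ m) x) ∈ c.support := by
        rw [← Equiv.Perm.support_inv c]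
        exact Equiv.Perm.apply_mem_support.mpr (by rwa [Equiv.Perm.support_inv])
      constructor
      · have := hstep _ ih2 ih1
        rw [pow_succ']
        simpa [Equiv.Perm.mul_apply] using this
      · rw [pow_succ']
        simpa [Equiv.Perm.mul_apply] using hmem
  apply Equiv.Perm.ext
  intro y
  rcases Classical.em (y ∈ c.support) with hy | hy
  · have hcinv : c⁻¹.IsCycle := hc.inv
    have hx' : c⁻¹ x ≠ x := by
      rw [← Equiv.Perm.mem_support, Equiv.Perm.support_inv]
      exact hxsupp
    have hy' : c⁻¹ y ≠ y := by
      rw [← Equiv.Perm.mem_support, Equiv.Perm.support_inv]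
      exact hy
    have hsc : c⁻¹.SameCycle x y := hcinv.sameCycle hx' hy'
    obtain ⟨i, _, _, hi⟩ := hsc.exists_pow_eq c⁻¹
    rw [← hi]
    exact (hiter i).1
  · rcases hall y with h1 | h2
    · rw [h1, Equiv.Perm.eq_inv_iff_eq]
      rw [Equiv.Perm.notMem_support] at hy
      exact hy
    · exact h2

lemma det_one_sub_smul_cycle {n : ℕ} (c : Equiv.Perm (Fin n)) (hc : c.IsCycle) (s : ℂ) :
    ((1 : Matrix (Fin n) (Fin n) ℂ) - s • c.permMatrix ℂ).det
      = (1 - s) ^ (n - c.support.card) * (1 - s ^ c.support.card) := by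
  classical
  rw [Matrix.det_apply]
  have hfilter : Finset.univ.filter (fun i : Fin n => c i = i) = c.supportᶜ := by
    ext i
    simp [Equiv.Perm.mem_support]
  have hfilter' : Finset.univ.filter (fun i : Fin n => ¬ c i = i) = c.support := by
    ext i
    simp [Equiv.Perm.mem_support]
  have hcardc : (c.supportᶜ : Finset (Fin n)).card = n - c.support.card := by
    rw [Finset.card_compl, Fintype.card_fin]
  have hne : (1 : Equiv.Perm (Fin n)) ≠ c⁻¹ := by
    intro h
    exact hc.ne_one (by rw [← inv_inv c, ← h, inv_one])
  have hsum := Finset.sum_subset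
    (Finset.subset_univ ({1, c⁻¹} : Finset (Equiv.Perm (Fin n))))
    (f := fun τ => Equiv.Perm.sign τ •
      ∏ i, ((1 : Matrix (Fin n) (Fin n) ℂ) - s • c.permMatrix ℂ) (τ i) i)
    (by
      intro τ _ hτ
      simp only [Finset.mem_insert, Finset.mem_singleton] at hτ
      push_neg at hτ
      obtain ⟨hτ1, hτc⟩ := hτ
      have hbad : ¬ ∀ i, τ i = i ∨ τ i = c⁻¹ i := by
        intro hall
        exact hτc (good_perm_eq hc hall hτ1)
      push_neg at hbad
      obtain ⟨i, hi1, hi2⟩ := hbad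
      have hz : ((1 : Matrix (Fin n) (Fin n) ℂ) - s • c.permMatrix ℂ) (τ i) i = 0 := by
        rw [perm_matrix_entry, if_neg hi1,
          if_neg (fun h => hi2 (Equiv.Perm.eq_inv_iff_eq.mpr h))]
        ring
      rw [Finset.prod_eq_zero (f := fun j : Fin n =>
        ((1 : Matrix (Fin n) (Fin n) ℂ) - s • c.permMatrix ℂ) (τ j) j)
        (Finset.mem_univ i) hz, smul_zero])
  rw [← hsum, Finset.sum_pair hne]
  -- first term
  have h1 : ∀ i : Fin n, ((1 : Matrix (Fin n) (Fin n) ℂ) - s • c.permMatrix ℂ) i i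
      = if c i = i then 1 - s else 1 := by
    intro i
    rw [perm_matrix_entry, if_pos rfl]
    by_cases h : c i = i <;> simp [h]
  have h2 : ∀ i : Fin n, ((1 : Matrix (Fin n) (Fin n) ℂ) - s • c.permMatrix ℂ) (c⁻¹ i) i
      = if c i = i then 1 - s else -s := by
    intro i
    rw [perm_matrix_entry]
    have hinv : c⁻¹ i = i ↔ c i = i := by
      rw [Equiv.Perm.inv_eq_iff_eq, eq_comm]
    rw [if_pos (show c (c⁻¹ i) = i from Equiv.apply_symm_apply c i)]
    by_cases h : c i = i
    · rw [if_pos (hinv.mpr h), if_pos h]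
      ring
    · rw [if_neg (fun hh => h (hinv.mp hh)), if_neg h]
      ring
  have hprod1 : (∏ i, ((1 : Matrix (Fin n) (Fin n) ℂ) - s • c.permMatrix ℂ) i i)
      = (1 - s) ^ (n - c.support.card) := by
    simp only [h1]
    rw [Finset.prod_ite, Finset.prod_const, Finset.prod_const, hfilter, hfilter', hcardc,
      one_pow, mul_one]
  have hprod2 : (∏ i, ((1 : Matrix (Fin n) (Fin n) ℂ) - s • c.permMatrix ℂ) (c⁻¹ i) i)
      = (1 - s) ^ (n - c.support.card) * (-s) ^ c.support.card := by
    simp only [h2]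
    rw [Finset.prod_ite, Finset.prod_const, Finset.prod_const, hfilter, hfilter', hcardc]
  simp only [Equiv.Perm.coe_one, id_eq]
  rw [hprod1, hprod2]
  rw [Equiv.Perm.sign_inv, hc.sign, Equiv.Perm.sign_one, one_smul, Units.smul_def, zsmul_eq_mul]
  push_cast
  have h11 : ((-1 : ℂ)) ^ c.support.card * (-1) ^ c.support.card = 1 := by
    rw [← mul_pow]; norm_num
  have hneg : (-s) ^ c.support.card = (-1 : ℂ) ^ c.support.card * s ^ c.support.card := by
    rw [neg_pow]
  rw [hneg]
  linear_combination (-((1 - s) ^ (n - c.support.card) * s ^ c.support.card)) * h11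

lemma perm_matrix_entry' {n : ℕ} (σ : Equiv.Perm (Fin n)) (i j : Fin n) :
    (σ.permMatrix ℂ) i j = if σ i = j then 1 else 0 := by
  simp [PEquiv.toMatrix_apply, Equiv.toPEquiv_apply]

lemma permMatrix_mul {n : ℕ} (σ τ : Equiv.Perm (Fin n)) :
    (σ.permMatrix ℂ) * (τ.permMatrix ℂ) = (τ * σ).permMatrix ℂ := by
  show (σ.toPEquiv.toMatrix : Matrix _ _ ℂ) * τ.toPEquiv.toMatrix = (τ * σ).toPEquiv.toMatrix
  rw [← PEquiv.toMatrix_trans, ← Equiv.toPEquiv_trans]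
  rfl

lemma permMatrix_add_disjoint {n : ℕ} {σ τ : Equiv.Perm (Fin n)} (h : Equiv.Perm.Disjoint σ τ) :
    (σ.permMatrix ℂ) + (τ.permMatrix ℂ) = ((σ * τ).permMatrix ℂ) + 1 := by
  ext i j
  simp only [Matrix.add_apply, perm_matrix_entry', Matrix.one_apply, Equiv.Perm.mul_apply]
  rcases h i with h1 | h2
  · rcases Classical.em (τ i = i) with h2 | h2
    · simp [h1, h2]
    · have hτs : σ (τ i) = τ i := by
        rcases h (τ i) with hh | hh
        · exact hh
        · exact absurd (τ.injective hh) h2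
      simp only [h1, hτs]
      ring
  · simp only [h2]

lemma one_sub_smul_mul_disjoint {n : ℕ} {σ τ : Equiv.Perm (Fin n)}
    (h : Equiv.Perm.Disjoint σ τ) (s : ℂ) :
    ((1 : Matrix (Fin n) (Fin n) ℂ) - s • σ.permMatrix ℂ)
      * ((1 : Matrix (Fin n) (Fin n) ℂ) - s • τ.permMatrix ℂ)
      = (1 - s) • ((1 : Matrix (Fin n) (Fin n) ℂ) - s • (σ * τ).permMatrix ℂ) := by
  have hM : (σ.permMatrix ℂ) * (τ.permMatrix ℂ) = ((σ * τ).permMatrix ℂ) := by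
    rw [permMatrix_mul, h.commute.eq]
  have hA := permMatrix_add_disjoint h
  rw [mul_sub, Matrix.mul_one, Matrix.mul_smul, sub_mul, Matrix.one_mul, Matrix.smul_mul,
    hM]
  have : (σ.permMatrix ℂ) = ((σ * τ).permMatrix ℂ) + 1 - (τ.permMatrix ℂ) := by
    rw [← hA]; abel
  rw [this]
  rw [sub_smul, one_smul]
  module

lemma count_fixed_cycle {n : ℕ} {c : Equiv.Perm (Fin n)} (hc : c.IsCycle) (M : ℕ) :
    (Finset.univ.filter (fun x : Fin n => (c ^ M) x = x)).card
      = (n - c.support.card) + (if c.support.card ∣ M then c.support.card else 0) := by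
  by_cases hd : c.support.card ∣ M
  · have hcM : c ^ M = 1 := by
      rw [← hc.orderOf] at hd
      exact orderOf_dvd_iff_pow_eq_one.mp hd
    rw [if_pos hd, hcM]
    simp only [Equiv.Perm.one_apply]
    rw [Finset.filter_true, Finset.card_univ, Fintype.card_fin]
    have := Finset.card_le_univ c.support
    rw [Fintype.card_fin] at this
    omega
  · rw [if_neg hd, add_zero]
    have : Finset.univ.filter (fun x : Fin n => (c ^ M) x = x) = c.supportᶜ := by
      ext x
      simp only [Finset.mem_filter, Finset.mem_univ, true_and, Finset.mem_compl,
        Equiv.Perm.mem_support, not_not]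
      constructor
      · intro hx
        by_contra hcx
        apply hd
        rw [← hc.orderOf]
        apply orderOf_dvd_iff_pow_eq_one.mpr
        exact (hc.pow_eq_one_iff).mpr ⟨x, hcx, hx⟩
      · intro hx
        exact Equiv.Perm.pow_apply_eq_self_of_apply_eq_self hx M
    rw [this, Finset.card_compl, Fintype.card_fin]

lemma count_fixed_disjoint {n : ℕ} {σ τ : Equiv.Perm (Fin n)} (h : Equiv.Perm.Disjoint σ τ)
    (M : ℕ) :
    (Finset.univ.filter (fun x : Fin n => ((σ * τ) ^ M) x = x)).card + n
      = (Finset.univ.filter (fun x : Fin n => (σ ^ M) x = x)).card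
        + (Finset.univ.filter (fun x : Fin n => (τ ^ M) x = x)).card := by
  have hmul : (σ * τ) ^ M = σ ^ M * τ ^ M := h.commute.mul_pow M
  have hdis : (σ ^ M).Disjoint (τ ^ M) := h.pow_disjoint_pow M M
  have hinter : Finset.univ.filter (fun x : Fin n => ((σ * τ) ^ M) x = x)
      = (Finset.univ.filter (fun x : Fin n => (σ ^ M) x = x))
        ∩ (Finset.univ.filter (fun x : Fin n => (τ ^ M) x = x)) := by
    ext x
    simp only [Finset.mem_filter, Finset.mem_inter, Finset.mem_univ, true_and, hmul]
    exact hdis.mul_apply_eq_iff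
  have hunion : (Finset.univ.filter (fun x : Fin n => (σ ^ M) x = x))
      ∪ (Finset.univ.filter (fun x : Fin n => (τ ^ M) x = x)) = Finset.univ := by
    apply Finset.eq_univ_of_forall
    intro x
    simp only [Finset.mem_union, Finset.mem_filter, Finset.mem_univ, true_and]
    rcases h x with h1 | h2
    · exact Or.inl (Equiv.Perm.pow_apply_eq_self_of_apply_eq_self h1 M)
    · exact Or.inr (Equiv.Perm.pow_apply_eq_self_of_apply_eq_self h2 M)
  have := Finset.card_union_add_card_inter
    (Finset.univ.filter (fun x : Fin n => (σ ^ M) x = x))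
    (Finset.univ.filter (fun x : Fin n => (τ ^ M) x = x))
  rw [hunion, Finset.card_univ, Fintype.card_fin] at this
  rw [hinter]
  omega

end Helpers


lemma exp_nat_neg_log {z : ℂ} (hz : z ≠ 0) (k : ℕ) :
    Complex.exp ((k : ℂ) * -Complex.log z) * z ^ k = 1 := by
  rw [Complex.exp_nat_mul, Complex.exp_neg, Complex.exp_log hz, inv_pow,
    inv_mul_cancel₀ (pow_ne_zero k hz)]

lemma exp_neg_log {z : ℂ} (hz : z ≠ 0) :
    Complex.exp (-Complex.log z) * z = 1 := by
  rw [Complex.exp_neg, Complex.exp_log hz, inv_mul_cancel₀ hz]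

/-- **Determinant expression for the permutation zeta function.**
For a permutation `σ` of `Fin n` and `s ∈ ℂ` with `|s| < 1`,
`exp(∑_{m≥1} #Fix(σ^m)/m · s^m) · det(I_n − s·P_σ) = 1`. -/
theorem perm_zeta_det_expression (n : ℕ) (σ : Equiv.Perm (Fin n)) (s : ℂ)
    (hs : ‖s‖ < 1) :
    Complex.exp (∑' m : ℕ,
        ((Finset.univ.filter (fun x : Fin n => (σ ^ (m + 1)) x = x)).card : ℂ)
          / (m + 1) * s ^ (m + 1)) *
      ((1 : Matrix (Fin n) (Fin n) ℂ) - s • σ.permMatrix ℂ).det = 1 := by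
  have h1s : (1 : ℂ) - s ≠ 0 := by
    intro h
    have hs1 : s = 1 := by linear_combination -h
    rw [hs1, norm_one] at hs
    exact lt_irrefl 1 hs
  suffices h : ∃ L : ℂ, HasSum (fun m : ℕ =>
      ((Finset.univ.filter (fun x : Fin n => (σ ^ (m + 1)) x = x)).card : ℂ)
        / (m + 1) * s ^ (m + 1)) L ∧
      Complex.exp L * ((1 : Matrix (Fin n) (Fin n) ℂ) - s • σ.permMatrix ℂ).det = 1 by
    obtain ⟨L, hL, hdet⟩ := h
    rw [hL.tsum_eq]
    exact hdet
  induction σ using Equiv.Perm.cycle_induction_on with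
  | base_one =>
    refine ⟨(n : ℂ) * -Complex.log (1 - s), ?_, ?_⟩
    · have h := (hasSum_geom_log hs).mul_left (n : ℂ)
      convert h using 1
      · rfl
      funext m
      norm_num [one_pow]
      ring
    · have hperm : ((1 : Equiv.Perm (Fin n)).permMatrix ℂ) = 1 := by
        show ((Equiv.refl (Fin n)).toPEquiv.toMatrix : Matrix _ _ ℂ) = 1
        rw [Equiv.toPEquiv_refl, PEquiv.toMatrix_refl]
      rw [hperm, show (1 : Matrix (Fin n) (Fin n) ℂ) - s • 1 = (1 - s) • 1 by
        rw [sub_smul, one_smul], Matrix.det_smul, Matrix.det_one, mul_one, Fintype.card_fin]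
      exact exp_nat_neg_log h1s n
  | base_cycles c hc =>
    have hk0 : 0 < c.support.card := by
      have := hc.two_le_card_support
      omega
    have hzk : (1 : ℂ) - s ^ c.support.card ≠ 0 := by
      intro h
      have : s ^ c.support.card = 1 := by linear_combination -h
      have hn := congrArg norm this
      rw [norm_pow, norm_one] at hn
      have := pow_lt_one₀ (norm_nonneg s) hs hk0.ne'
      rw [hn] at this
      exact lt_irrefl 1 this
    refine ⟨((n - c.support.card : ℕ) : ℂ) * -Complex.log (1 - s)
        + -Complex.log (1 - s ^ c.support.card), ?_, ?_⟩
    · have h := ((hasSum_geom_log hs).mul_left ((n - c.support.card : ℕ) : ℂ)).add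
        (hasSum_dvd_log hs hk0)
      convert h using 1
      · rfl
      funext m
      rw [count_fixed_cycle hc (m + 1)]
      push_cast [apply_ite (Nat.cast (R := ℂ))]
      ring
    · rw [det_one_sub_smul_cycle c hc s, Complex.exp_add]
      have e1 := exp_nat_neg_log h1s (n - c.support.card)
      have e2 := exp_neg_log hzk
      calc Complex.exp (((n - c.support.card : ℕ) : ℂ) * -Complex.log (1 - s))
            * Complex.exp (-Complex.log (1 - s ^ c.support.card))
            * ((1 - s) ^ (n - c.support.card) * (1 - s ^ c.support.card))
          = (Complex.exp (((n - c.support.card : ℕ) : ℂ) * -Complex.log (1 - s))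
              * (1 - s) ^ (n - c.support.card))
            * (Complex.exp (-Complex.log (1 - s ^ c.support.card))
              * (1 - s ^ c.support.card)) := by ring
        _ = 1 := by rw [e1, e2, one_mul]
  | induction_disjoint σ τ hdisj hcyc ih1 ih2 =>
    obtain ⟨L₁, h₁, e₁⟩ := ih1
    obtain ⟨L₂, h₂, e₂⟩ := ih2
    refine ⟨L₁ + L₂ - (n : ℂ) * -Complex.log (1 - s), ?_, ?_⟩
    · have h := (h₁.add h₂).sub ((hasSum_geom_log hs).mul_left (n : ℂ))
      convert h using 1
      · rfl
      funext m
      have hcount := count_fixed_disjoint hdisj (m + 1)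
      have hcast : ((Finset.univ.filter
            (fun x : Fin n => ((σ * τ) ^ (m + 1)) x = x)).card : ℂ)
          = ((Finset.univ.filter (fun x : Fin n => (σ ^ (m + 1)) x = x)).card : ℂ)
            + ((Finset.univ.filter (fun x : Fin n => (τ ^ (m + 1)) x = x)).card : ℂ)
            - n := by
        have := congrArg (Nat.cast (R := ℂ)) hcount
        rw [Nat.cast_add, Nat.cast_add] at this
        linear_combination this
      rw [hcast]
      ring
    · have hdet : ((1 : Matrix (Fin n) (Fin n) ℂ) - s • σ.permMatrix ℂ).det
          * ((1 : Matrix (Fin n) (Fin n) ℂ) - s • τ.permMatrix ℂ).det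
          = (1 - s) ^ n
            * ((1 : Matrix (Fin n) (Fin n) ℂ) - s • (σ * τ).permMatrix ℂ).det := by
        rw [← Matrix.det_mul, one_sub_smul_mul_disjoint hdisj s, Matrix.det_smul,
          Fintype.card_fin]
      have hexp : Complex.exp (L₁ + L₂ - (n : ℂ) * -Complex.log (1 - s))
          = Complex.exp L₁ * Complex.exp L₂ * (1 - s) ^ n := by
        rw [show L₁ + L₂ - (n : ℂ) * -Complex.log (1 - s)
            = L₁ + L₂ + (n : ℂ) * Complex.log (1 - s) by ring,
          Complex.exp_add, Complex.exp_add, Complex.exp_nat_mul, Complex.exp_log h1s]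
      rw [hexp]
      linear_combination (Complex.exp L₁ * Complex.exp L₂) * hdet.symm
        + (Complex.exp L₁ * ((1 : Matrix (Fin n) (Fin n) ℂ) - s • σ.permMatrix ℂ).det) * e₂
        + e₁
end

section
/- Let σ be a permutation of Fin n and s ∈ ℂ. If det(I_n − e^{−s}·P_σ) = 0, then Re(s) = 0. (Analogue of the Riemann hypothesis for the permutation zeta function ζ_σ(s) = det(I_n − s·P_σ)^{−1}: all poles of ζ_σ(e^{−s}) lie on the line Re(s) = 0.) -/
open Matrix

/-- **Riemann hypothesis analogue for the permutation zeta function.**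
If `det(I_n − e^{−s}·P_σ) = 0` then `Re(s) = 0`. -/
theorem perm_zeta_riemann_hypothesis (n : ℕ) (σ : Equiv.Perm (Fin n)) (s : ℂ)
    (h : ((1 : Matrix (Fin n) (Fin n) ℂ) - Complex.exp (-s) • σ.permMatrix ℂ).det = 0) :
    s.re = 0 := by
  set c := Complex.exp (-s) with hc
  obtain ⟨v, hv, hmul⟩ := Matrix.exists_mulVec_eq_zero_iff.mpr h
  have key : ∀ i, v i = c * v (σ i) := by
    intro i
    have := congrFun hmul i
    simpa [Matrix.sub_mulVec, Matrix.smul_mulVec, Matrix.mulVec, dotProduct,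
      Equiv.Perm.permMatrix, PEquiv.toMatrix_apply, Equiv.toPEquiv, ite_mul, zero_mul,
      Matrix.one_apply, sub_mul, Finset.sum_sub_distrib, Finset.sum_ite_eq,
      Finset.sum_ite_eq', sub_eq_zero] using this
  have iter : ∀ k : ℕ, ∀ i, v i = c ^ k * v ((σ ^ k) i) := by
    intro k
    induction k with
    | zero => simp
    | succ m ih =>
      intro i
      rw [key i, ih (σ i)]; simp only [pow_succ, Equiv.Perm.mul_apply]
      ring
  obtain ⟨i, hi⟩ := Function.ne_iff.mp hv
  simp only [Pi.zero_apply] at hi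
  have hk : c ^ orderOf σ = 1 := by
    have h1 := iter (orderOf σ) i
    rw [pow_orderOf_eq_one σ, Equiv.Perm.one_apply] at h1
    have h2 : v i * 1 = v i * c ^ orderOf σ := by rw [mul_one]; linear_combination h1
    exact (mul_left_cancel₀ hi h2).symm
  have habs : Real.exp ((orderOf σ : ℝ) * (-s).re) = 1 := by
    have h4 : ‖c ^ orderOf σ‖ = 1 := by rw [hk]; simp
    rw [norm_pow, hc, Complex.norm_exp, ← Real.exp_nat_mul] at h4
    exact h4
  have h3 : (orderOf σ : ℝ) * (-s).re = 0 := by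
    have := congrArg Real.log habs
    simpa [Real.log_exp] using this
  have hord : (orderOf σ : ℝ) ≠ 0 := Nat.cast_ne_zero.mpr (orderOf_pos σ).ne'
  have := (mul_eq_zero.mp h3).resolve_left hord
  simpa [neg_eq_zero] using this
end

section
/- For every word w ∈ FreeGroup (Fin (n−1)) and every s ∈ ℂ, det(I_n − s·β_{n,q}(w)) = (1 − s) · det(I_{n−1} − s·β^r_{n,q}(w)). (The Burau representation decomposes as the direct sum of the trivial representation and the reduced Burau representation: conjugating by the explicit matrix C_{n,q} with entries (C_{n,q})_{ij} = q^{i−1} for i ≤ j and 0 otherwise turns β_{n,q} into 1 ⊕ β^r_{n,q}.) -/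
open Matrix

/-- The (unreduced) Burau matrix `B_{i+1} = I_i ⊕ [[1−q, 1], [q, 0]] ⊕ I_{n-i-2}`
(the 2×2 block sits in rows/columns `i`, `i+1`, zero-based). -/
noncomputable def burauMatrix (n : ℕ) (q : ℂ) (i : Fin (n - 1)) :
    Matrix (Fin n) (Fin n) ℂ := fun j k =>
  if (j : ℕ) = i ∧ (k : ℕ) = i then 1 - q
  else if (j : ℕ) = i ∧ (k : ℕ) = (i : ℕ) + 1 then 1
  else if (j : ℕ) = (i : ℕ) + 1 ∧ (k : ℕ) = i then q
  else if (j : ℕ) = (i : ℕ) + 1 ∧ (k : ℕ) = (i : ℕ) + 1 then 0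
  else if j = k then 1 else 0

/-- The reduced Burau matrix `B^r_{i+1}` (zero-based generator index `i`): it agrees
with the identity except in row `i`, where the entries at columns `i−1, i, i+1`
are `q, −q, 1` respectively. -/
noncomputable def rBurauMatrix (n : ℕ) (q : ℂ) (i : Fin (n - 1)) :
    Matrix (Fin (n - 1)) (Fin (n - 1)) ℂ := fun j k =>
  if (j : ℕ) = i then
    if (k : ℕ) + 1 = i then q
    else if (k : ℕ) = i then -q
    else if (k : ℕ) = (i : ℕ) + 1 then 1
    else 0
  else if j = k then 1 else 0


namespace BurauAux

/-- lower-triangular all ones -/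
noncomputable def T (m : ℕ) : Matrix (Fin (m+1)) (Fin (m+1)) ℂ :=
  fun j k => if (k:ℕ) ≤ (j:ℕ) then 1 else 0

/-- its inverse: 1 on diagonal, -1 on subdiagonal -/
noncomputable def T' (m : ℕ) : Matrix (Fin (m+1)) (Fin (m+1)) ℂ :=
  fun j k => if (j:ℕ) = (k:ℕ) then 1 else if (j:ℕ) = (k:ℕ)+1 then -1 else 0

lemma sum_delta {N : ℕ} (t : ℕ) (f : Fin N → ℂ) :
    (∑ l : Fin N, if (l:ℕ) = t then f l else 0) = if h : t < N then f ⟨t, h⟩ else 0 := by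
  split
  · next h =>
    rw [Finset.sum_eq_single (⟨t, h⟩ : Fin N)]
    · simp
    · intro b _ hb
      rw [if_neg fun hc => hb (Fin.ext hc)]
    · intro hmem; exact absurd (Finset.mem_univ _) hmem
  · next h =>
    apply Finset.sum_eq_zero
    intro l _
    have : (l:ℕ) ≠ t := by omega
    rw [if_neg this]

lemma TT' (m : ℕ) : T m * T' m = 1 := by
  ext j k
  rw [Matrix.mul_apply]
  rw [Finset.sum_congr rfl (fun l _ => show T m j l * T' m l k
      = (if (l:ℕ) = (k:ℕ) then (if (k:ℕ) ≤ (j:ℕ) then (1:ℂ) else 0) else 0)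
      + (if (l:ℕ) = (k:ℕ)+1 then (if (k:ℕ)+1 ≤ (j:ℕ) then (-1:ℂ) else 0) else 0) by
    simp only [T, T']
    split_ifs <;> first | ring1 | omega)]
  rw [Finset.sum_add_distrib, sum_delta, sum_delta, Matrix.one_apply]
  simp only [Fin.ext_iff]
  split_ifs <;> first | ring1 | omega

lemma T'T (m : ℕ) : T' m * T m = 1 := by
  ext j k
  rw [Matrix.mul_apply]
  rw [Finset.sum_congr rfl (fun l _ => show T' m j l * T m l k
      = (if (l:ℕ) = (j:ℕ) then (if (k:ℕ) ≤ (j:ℕ) then (1:ℂ) else 0) else 0)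
      + (if (l:ℕ) = (j:ℕ)-1 then (if 1 ≤ (j:ℕ) ∧ (k:ℕ) ≤ (j:ℕ)-1 then (-1:ℂ) else 0) else 0) by
    simp only [T, T']
    split_ifs <;> first | ring1 | omega)]
  rw [Finset.sum_add_distrib, sum_delta, sum_delta, Matrix.one_apply]
  simp only [Fin.ext_iff]
  split_ifs <;> first | ring1 | omega

end BurauAux

namespace BurauAux2
open BurauAux

/-- `T * B_i * T'` in closed form: identity except row `i` which is `(…, q, -q, 1, …)`
(entries at columns `i-1, i, i+1`). -/
noncomputable def bigR (m : ℕ) (q : ℂ) (i : Fin m) : Matrix (Fin (m+1)) (Fin (m+1)) ℂ :=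
  fun j k =>
    if (j:ℕ) = (i:ℕ) then
      if (k:ℕ) + 1 = (i:ℕ) then q
      else if (k:ℕ) = (i:ℕ) then -q
      else if (k:ℕ) = (i:ℕ)+1 then 1
      else 0
    else if (j:ℕ) = (k:ℕ) then 1 else 0

set_option maxHeartbeats 16000000 in
lemma TBu (m : ℕ) (q : ℂ) (i : Fin ((m+1) - 1)) :
    T m * burauMatrix (m+1) q i = bigR m q i * T m := by
  have hBu : ∀ l k : Fin (m+1), burauMatrix (m+1) q i l k
      = (if (l:ℕ) = (i:ℕ) then
          (if (k:ℕ) = (i:ℕ) then 1-q else if (k:ℕ) = (i:ℕ)+1 then (1:ℂ) else 0) else 0)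
      + (if (l:ℕ) = (i:ℕ)+1 then (if (k:ℕ) = (i:ℕ) then q else 0) else 0)
      + (if (l:ℕ) = (k:ℕ) then
          (if ¬(k:ℕ) = (i:ℕ) ∧ ¬(k:ℕ) = (i:ℕ)+1 then (1:ℂ) else 0) else 0) := by
    intro l k
    simp only [burauMatrix, Fin.ext_iff]
    split_ifs <;> first | ring1 | omega
  have hbigR : ∀ j l : Fin (m+1), bigR m q i j l
      = (if (l:ℕ) = (i:ℕ)-1 then (if (j:ℕ) = (i:ℕ) ∧ 1 ≤ (i:ℕ) then q else 0) else 0)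
      + (if (l:ℕ) = (i:ℕ) then (if (j:ℕ) = (i:ℕ) then -q else 0) else 0)
      + (if (l:ℕ) = (i:ℕ)+1 then (if (j:ℕ) = (i:ℕ) then (1:ℂ) else 0) else 0)
      + (if (l:ℕ) = (j:ℕ) then (if ¬(j:ℕ) = (i:ℕ) then (1:ℂ) else 0) else 0) := by
    intro j l
    simp only [bigR, Fin.ext_iff]
    split_ifs <;> first | ring1 | omega
  ext j k
  rw [Matrix.mul_apply, Matrix.mul_apply]
  simp only [hBu, hbigR, mul_add, mul_ite, mul_zero, add_mul, ite_mul, zero_mul,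
    Finset.sum_add_distrib, sum_delta]
  have hi : (i:ℕ) < m := i.isLt
  rw [dif_pos (show (i:ℕ) < m+1 by omega), dif_pos (show (i:ℕ)+1 < m+1 by omega),
    dif_pos (show (k:ℕ) < m+1 by omega), dif_pos (show (i:ℕ)-1 < m+1 by omega),
    dif_pos (show (j:ℕ) < m+1 by omega)]
  simp only [T, Fin.val_mk]
  have hj := j.isLt
  have hk := k.isLt
  split_ifs <;> first | omega | ring1

end BurauAux2

namespace BurauAux3
open BurauAux BurauAux2

/-- `ext1 N A b c` is the block matrix `[[A, b], [0, c]]` on `Fin N` (for `N = M+1`). -/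
noncomputable def ext1 (N : ℕ) {M : ℕ} (A : Matrix (Fin M) (Fin M) ℂ) (b : Fin M → ℂ)
    (c : ℂ) : Matrix (Fin N) (Fin N) ℂ := fun j k =>
  if hj : (j:ℕ) < M then
    (if hk : (k:ℕ) < M then A ⟨j, hj⟩ ⟨k, hk⟩ else b ⟨j, hj⟩)
  else (if (k:ℕ) < M then 0 else c)

lemma ext1_mul {N M : ℕ} (h : N = M + 1) (A A' : Matrix (Fin M) (Fin M) ℂ)
    (b b' : Fin M → ℂ) (c c' : ℂ) :
    ext1 N A b c * ext1 N A' b' c' = ext1 N (A * A') (A.mulVec b' + c' • b) (c * c') := by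
  subst h
  ext j k
  rw [Matrix.mul_apply, Fin.sum_univ_castSucc]
  by_cases hj : (j:ℕ) < M <;> by_cases hk : (k:ℕ) < M <;>
    simp [ext1, hj, hk, Matrix.mul_apply, Matrix.mulVec, dotProduct, mul_comm]

lemma ext1_one {N M : ℕ} (h : N = M + 1) :
    ext1 N (1 : Matrix (Fin M) (Fin M) ℂ) 0 1 = 1 := by
  subst h
  ext j k
  have hj' := j.isLt
  have hk' := k.isLt
  by_cases hj : (j:ℕ) < M <;> by_cases hk : (k:ℕ) < M <;>
    simp [ext1, hj, hk, Matrix.one_apply, Fin.ext_iff] <;>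
    first | omega | (split_ifs <;> first | omega | ring1)

lemma ext1_sub_smul {N M : ℕ} (h : N = M + 1) (A : Matrix (Fin M) (Fin M) ℂ)
    (b : Fin M → ℂ) (s : ℂ) :
    (1 : Matrix (Fin N) (Fin N) ℂ) - s • ext1 N A b 1
      = ext1 N (1 - s • A) (-(s • b)) (1 - s) := by
  subst h
  ext j k
  have hj' := j.isLt
  have hk' := k.isLt
  by_cases hj : (j:ℕ) < M <;> by_cases hk : (k:ℕ) < M <;>
    simp [ext1, hj, hk, Matrix.one_apply, Fin.ext_iff, Matrix.sub_apply] <;>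
    first | omega | ring1 | (split_ifs <;> first | omega | ring1)

lemma ext1_det {N M : ℕ} (h : N = M + 1) (A : Matrix (Fin M) (Fin M) ℂ) (b : Fin M → ℂ)
    (c : ℂ) : (ext1 N A b c).det = A.det * c := by
  subst h
  have : ext1 (M+1) A b c =
      (Matrix.fromBlocks A (Matrix.of fun j (_ : Fin 1) => b j) 0 (Matrix.of fun _ _ => c)).submatrix
        (finSumFinEquiv.symm) (finSumFinEquiv.symm) := by
    ext j k
    rw [Matrix.submatrix_apply]
    rcases hj : finSumFinEquiv.symm j with a | a <;> rcases hk : finSumFinEquiv.symm k with d | d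
    all_goals {
      rw [Equiv.symm_apply_eq] at hj hk
      subst hj; subst hk
      first
        | rw [Matrix.fromBlocks_apply₁₁]
        | rw [Matrix.fromBlocks_apply₁₂]
        | rw [Matrix.fromBlocks_apply₂₁]
        | rw [Matrix.fromBlocks_apply₂₂]
      simp [ext1, finSumFinEquiv_apply_left, finSumFinEquiv_apply_right,
        Fin.ext_iff, Fin.castAdd, Fin.natAdd, Fin.fin_one_eq_zero]
    }
  rw [this, Matrix.det_submatrix_equiv_self, Matrix.det_fromBlocks_zero₂₁]
  congr 1
  rw [Matrix.det_fin_one]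
  rfl

end BurauAux3

namespace BurauAux4
open BurauAux BurauAux2 BurauAux3

lemma bigR_ext1 (m : ℕ) (q : ℂ) (i : Fin ((m+1) - 1)) :
    bigR m q i = ext1 (m+1) (rBurauMatrix (m+1) q i)
      (fun j => if (j:ℕ) = (i:ℕ) ∧ (i:ℕ)+1 = m then 1 else 0) 1 := by
  ext j k
  have hi : (i:ℕ) < m := i.isLt
  have hj := j.isLt
  have hk := k.isLt
  simp only [bigR, ext1, rBurauMatrix, Fin.ext_iff, Fin.val_mk]
  split_ifs <;> first | omega | ring1

end BurauAux4


/-- **Decomposition of the Burau representation.** For every braid word `w` and `s ∈ ℂ`,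
`det(I_n − s·β_{n,q}(w)) = (1 − s) · det(I_{n−1} − s·β^r_{n,q}(w))`. -/
theorem burau_decomposition (n : ℕ) (hn : 2 ≤ n) (q : ℂ) (hq : q ≠ 0)
    (β : FreeGroup (Fin (n - 1)) →* GL (Fin n) ℂ)
    (hβ : ∀ i, (β (FreeGroup.of i) : Matrix (Fin n) (Fin n) ℂ) = burauMatrix n q i)
    (βr : FreeGroup (Fin (n - 1)) →* GL (Fin (n - 1)) ℂ)
    (hβr : ∀ i, (βr (FreeGroup.of i) : Matrix (Fin (n - 1)) (Fin (n - 1)) ℂ) = rBurauMatrix n q i)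
    (w : FreeGroup (Fin (n - 1))) (s : ℂ) :
    ((1 : Matrix (Fin n) (Fin n) ℂ) - s • (β w : Matrix (Fin n) (Fin n) ℂ)).det
      = (1 - s) *
        ((1 : Matrix (Fin (n - 1)) (Fin (n - 1)) ℂ)
          - s • (βr w : Matrix (Fin (n - 1)) (Fin (n - 1)) ℂ)).det := by
  open BurauAux BurauAux2 BurauAux3 BurauAux4 in
  obtain ⟨m, rfl⟩ : ∃ m, n = m + 1 := ⟨n - 1, by omega⟩
  have hNM : m + 1 = (m + 1 - 1) + 1 := by omega
  have key : ∀ v : FreeGroup (Fin (m + 1 - 1)), ∃ b : Fin (m + 1 - 1) → ℂ,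
      T m * (β v : Matrix (Fin (m+1)) (Fin (m+1)) ℂ) * T' m
        = ext1 (m+1) (βr v : Matrix (Fin (m+1-1)) (Fin (m+1-1)) ℂ) b 1 := by
    intro v
    induction v using FreeGroup.induction_on with
    | C1 =>
      refine ⟨0, ?_⟩
      simp only [_root_.map_one, Units.val_one, mul_one]
      rw [TT', ext1_one hNM]
    | of i =>
      refine ⟨fun j => if (j:ℕ) = (i:ℕ) ∧ (i:ℕ)+1 = m then 1 else 0, ?_⟩
      rw [hβ i, hβr i,
        TBu, mul_assoc, TT', mul_one, bigR_ext1]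
    | inv_of i ih =>
      obtain ⟨b, hb⟩ := ih
      set R : Matrix (Fin (m+1-1)) (Fin (m+1-1)) ℂ := (↑(βr (FreeGroup.of i)) : Matrix (Fin (m+1-1)) (Fin (m+1-1)) ℂ) with hR
      set S : Matrix (Fin (m+1-1)) (Fin (m+1-1)) ℂ := (↑(βr ((FreeGroup.of i)⁻¹)) : Matrix (Fin (m+1-1)) (Fin (m+1-1)) ℂ) with hS
      have hRS : R * S = 1 := by
        rw [hR, hS, ← Units.val_mul, ← _root_.map_mul, mul_inv_cancel, _root_.map_one, Units.val_one]
      set V := ext1 (m+1) S (-(S.mulVec b)) 1 with hV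
      have h2 : (T m * (β (FreeGroup.of i) : Matrix (Fin (m+1)) (Fin (m+1)) ℂ) * T' m) * V = 1 := by
        rw [hb, hV, ext1_mul hNM, one_smul, mul_one]
        rw [show R.mulVec (-(S.mulVec b)) = -((R * S).mulVec b) by
          rw [Matrix.mulVec_neg, Matrix.mulVec_mulVec]]
        rw [hRS, Matrix.one_mulVec, neg_add_cancel, ext1_one hNM]
      have h1 : (T m * (β ((FreeGroup.of i)⁻¹) : Matrix (Fin (m+1)) (Fin (m+1)) ℂ) * T' m)
          * (T m * (β (FreeGroup.of i) : Matrix (Fin (m+1)) (Fin (m+1)) ℂ) * T' m) = 1 := by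
        simp only [mul_assoc]
        rw [← mul_assoc (T' m) (T m), T'T, one_mul,
          ← mul_assoc ((β ((FreeGroup.of i)⁻¹) : Matrix (Fin (m+1)) (Fin (m+1)) ℂ)),
          ← Units.val_mul, ← _root_.map_mul, inv_mul_cancel, _root_.map_one, Units.val_one,
          one_mul, TT']
      refine ⟨-(S.mulVec b), ?_⟩
      have h3 := congrArg (fun X => X * V) h1
      simp only [one_mul] at h3
      rw [mul_assoc, h2, mul_one] at h3
      exact h3
    | mul x y ihx ihy =>
      obtain ⟨bx, hbx⟩ := ihx
      obtain ⟨cy, hby⟩ := ihy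
      refine ⟨(βr x : Matrix (Fin (m+1-1)) (Fin (m+1-1)) ℂ).mulVec cy + bx, ?_⟩
      have hsplit : T m * (β (x * y) : Matrix (Fin (m+1)) (Fin (m+1)) ℂ) * T' m
          = (T m * (β x : Matrix (Fin (m+1)) (Fin (m+1)) ℂ) * T' m)
            * (T m * (β y : Matrix (Fin (m+1)) (Fin (m+1)) ℂ) * T' m) := by
        rw [_root_.map_mul, Units.val_mul]
        simp only [mul_assoc]
        rw [← mul_assoc (T' m) (T m), T'T, one_mul]
      rw [hsplit, hbx, hby, ext1_mul hNM, one_smul, mul_one, ← Units.val_mul,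
        ← _root_.map_mul]
  obtain ⟨b, hb⟩ := key w
  have hdetT : (T' m).det * (T m).det = 1 := by
    rw [mul_comm, ← Matrix.det_mul, TT', Matrix.det_one]
  have hw : (β w : Matrix (Fin (m+1)) (Fin (m+1)) ℂ)
      = T' m * ext1 (m+1) (βr w : Matrix (Fin (m+1-1)) (Fin (m+1-1)) ℂ) b 1 * T m := by
    rw [← hb]
    simp only [← mul_assoc]
    rw [T'T, one_mul, mul_assoc, T'T, mul_one]
  have hβw : (1 : Matrix (Fin (m+1)) (Fin (m+1)) ℂ)
        - s • (β w : Matrix (Fin (m+1)) (Fin (m+1)) ℂ)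
      = T' m * ((1 : Matrix (Fin (m+1)) (Fin (m+1)) ℂ)
          - s • ext1 (m+1) (βr w : Matrix (Fin (m+1-1)) (Fin (m+1-1)) ℂ) b 1) * T m := by
    rw [Matrix.mul_sub, Matrix.mul_smul, Matrix.sub_mul, Matrix.smul_mul, mul_one, T'T, hw]
  rw [hβw, Matrix.det_mul, Matrix.det_mul, ext1_sub_smul hNM, ext1_det hNM]
  linear_combination (((1 : Matrix (Fin (m+1-1)) (Fin (m+1-1)) ℂ)
    - s • (βr w : Matrix (Fin (m+1-1)) (Fin (m+1-1)) ℂ)).det * (1 - s)) * hdetT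
end

section
/- Let w ∈ FreeGroup (Fin (n−1)) be a word with det(I_{n−1} − β^r_{n,q}(w)) ≠ 0. Then the braid zeta function ζ(s) = det(I_n − s·β_{n,q}(w))^{−1} has a simple pole at s = 1, and (s − 1)·det(I_n − s·β_{n,q}(w))^{−1} tends to −det(I_{n−1} − β^r_{n,q}(w))^{−1} as s → 1 (s ≠ 1). In particular, since det(I_{n−1} − β^r_{n,q}(σ)) = [n]_q · Δ_{σ̂}(q) when the closure σ̂ of the braid σ is a knot (Burau's theorem), the residue of the braid zeta function at s = 1 equals −(1/[n]_q) · Δ_{σ̂}(q)^{−1}, where [n]_q = (1−q^n)/(1−q) and Δ_{σ̂}(q) is the Alexander polynomial. -/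
open Matrix

noncomputable def Pmat (n : ℕ) : Matrix (Fin n) (Fin n) ℂ :=
  fun j k => (if j = k then (1 : ℂ) else 0) - (if (j : ℕ) = (k : ℕ) + 1 then 1 else 0)

def braidSumEquiv (n : ℕ) (hn : 2 ≤ n) : Fin (n - 1) ⊕ Fin 1 ≃ Fin n :=
  finSumFinEquiv.trans (finCongr (by omega))

noncomputable def Tmat (n : ℕ) (hn : 2 ≤ n) (A : Matrix (Fin (n - 1)) (Fin (n - 1)) ℂ)
    (c : Matrix (Fin (n - 1)) (Fin 1) ℂ) : Matrix (Fin n) (Fin n) ℂ :=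
  reindex (braidSumEquiv n hn) (braidSumEquiv n hn) (fromBlocks A c 0 1)

lemma braidSumEquiv_inl (n : ℕ) (hn : 2 ≤ n) (x : Fin (n - 1)) :
    (braidSumEquiv n hn (Sum.inl x) : ℕ) = x := by
  simp [braidSumEquiv]

lemma braidSumEquiv_inr (n : ℕ) (hn : 2 ≤ n) (x : Fin 1) :
    (braidSumEquiv n hn (Sum.inr x) : ℕ) = n - 1 := by
  simp [braidSumEquiv]

lemma braidSumEquiv_symm (n : ℕ) (hn : 2 ≤ n) (m : Fin n) :
    (braidSumEquiv n hn).symm m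
      = if h : (m : ℕ) < n - 1 then Sum.inl ⟨m, h⟩ else Sum.inr 0 := by
  rw [Equiv.symm_apply_eq]
  split_ifs with h
  · exact Fin.ext (braidSumEquiv_inl n hn ⟨m, h⟩).symm
  · refine Fin.ext ?_
    rw [braidSumEquiv_inr]
    have := m.isLt
    omega

lemma Tmat_apply (n : ℕ) (hn : 2 ≤ n) (A : Matrix (Fin (n - 1)) (Fin (n - 1)) ℂ)
    (c : Matrix (Fin (n - 1)) (Fin 1) ℂ) (j k : Fin n) :
    Tmat n hn A c j k
      = if hj : (j : ℕ) < n - 1 then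
          (if hk : (k : ℕ) < n - 1 then A ⟨j, hj⟩ ⟨k, hk⟩ else c ⟨j, hj⟩ 0)
        else (if (k : ℕ) < n - 1 then 0 else 1) := by
  rw [Tmat, reindex_apply, submatrix_apply, braidSumEquiv_symm, braidSumEquiv_symm]
  split_ifs with h1 h2 h3 <;> simp [fromBlocks]

lemma Tmat_mul (n : ℕ) (hn : 2 ≤ n) (A B : Matrix (Fin (n - 1)) (Fin (n - 1)) ℂ)
    (c d : Matrix (Fin (n - 1)) (Fin 1) ℂ) :
    Tmat n hn A c * Tmat n hn B d = Tmat n hn (A * B) (A * d + c) := by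
  rw [Tmat, Tmat, Tmat, reindex_apply, reindex_apply, reindex_apply,
    submatrix_mul_equiv, fromBlocks_multiply]
  congr 1 <;> simp

lemma Tmat_one (n : ℕ) (hn : 2 ≤ n) : Tmat n hn 1 0 = 1 := by
  rw [Tmat, fromBlocks_one, reindex_apply, submatrix_one_equiv]

lemma det_one_sub_smul_Tmat (n : ℕ) (hn : 2 ≤ n) (A : Matrix (Fin (n - 1)) (Fin (n - 1)) ℂ)
    (c : Matrix (Fin (n - 1)) (Fin 1) ℂ) (s : ℂ) :
    ((1 : Matrix (Fin n) (Fin n) ℂ) - s • Tmat n hn A c).det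
      = (1 - s • A).det * (1 - s) := by
  have key : ∀ X : Matrix (Fin (n-1) ⊕ Fin 1) (Fin (n-1) ⊕ Fin 1) ℂ,
      reindex (braidSumEquiv n hn) (braidSumEquiv n hn) (1 - s • X)
        = 1 - s • reindex (braidSumEquiv n hn) (braidSumEquiv n hn) X := by
    intro X
    ext j k
    simp [reindex_apply, submatrix_apply, one_apply]
  have h1 : (1 : Matrix (Fin n) (Fin n) ℂ) - s • Tmat n hn A c
      = reindex (braidSumEquiv n hn) (braidSumEquiv n hn)
          (fromBlocks (1 - s • A) (-(s • c)) 0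
            (1 - s • (1 : Matrix (Fin 1) (Fin 1) ℂ))) := by
    rw [Tmat, ← key]
    congr 1
    rw [← fromBlocks_one, sub_eq_add_neg, fromBlocks_smul, fromBlocks_neg, fromBlocks_add]
    simp [sub_eq_add_neg]
  rw [h1, det_reindex_self, det_fromBlocks_zero₂₁]
  congr 1
  simp [det_fin_one, one_apply]

lemma sum_ite_coe_eq {n : ℕ} (f : Fin n → ℂ) (m : ℕ) :
    (∑ l : Fin n, if (l : ℕ) = m then f l else 0)
      = if h : m < n then f ⟨m, h⟩ else 0 := by
  split_ifs with h
  · refine Finset.sum_eq_single_of_mem ⟨m, h⟩ (Finset.mem_univ _) ?_ |>.trans (by simp)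
    intro b _ hb
    rw [if_neg]
    exact fun hbm => hb (Fin.ext hbm)
  · refine Finset.sum_eq_zero fun l _ => ?_
    rw [if_neg]
    exact fun he => h (he ▸ l.isLt)

lemma mul_Pmat {n : ℕ} (M : Matrix (Fin n) (Fin n) ℂ) (j k : Fin n) :
    (M * Pmat n) j k
      = M j k - (if h : (k : ℕ) + 1 < n then M j ⟨(k : ℕ) + 1, h⟩ else 0) := by
  rw [mul_apply]
  simp only [Pmat, mul_sub, mul_ite, mul_one, mul_zero]
  rw [Finset.sum_sub_distrib]
  congr 1
  · simp
  · have : ∀ l : Fin n, (if (l : ℕ) = (k : ℕ) + 1 then M j l else 0)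
        = (fun l : Fin n => if (l : ℕ) = (k : ℕ) + 1 then M j l else 0) l := fun _ => rfl
    rw [Finset.sum_congr rfl fun l _ => this l, sum_ite_coe_eq (fun l => M j l) ((k : ℕ) + 1)]

lemma Pmat_mul {n : ℕ} (T : Matrix (Fin n) (Fin n) ℂ) (j k : Fin n) :
    (Pmat n * T) j k
      = T j k - (if h : 0 < (j : ℕ) then T ⟨(j : ℕ) - 1, by omega⟩ k else 0) := by
  rw [mul_apply]
  simp only [Pmat, sub_mul, ite_mul, one_mul, zero_mul]
  rw [Finset.sum_sub_distrib]
  congr 1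
  · simp
  · have h1 : ∀ l : Fin n, (if (j : ℕ) = (l : ℕ) + 1 then T l k else 0)
        = if 0 < (j : ℕ) then (if (l : ℕ) = (j : ℕ) - 1 then T l k else 0) else 0 := by
      intro l
      rcases Nat.eq_zero_or_pos (j : ℕ) with hj | hj
      · rw [if_neg (by omega), if_neg (by omega)]
      · rw [if_pos hj]
        exact if_congr (by omega) rfl rfl
    rw [Finset.sum_congr rfl fun l _ => h1 l]
    rcases Nat.eq_zero_or_pos (j : ℕ) with hj | hj
    · simp [hj]
    · rw [dif_pos hj]
      simp only [if_pos hj]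
      rw [sum_ite_coe_eq (fun l => T l k) ((j : ℕ) - 1), dif_pos (by omega)]

lemma det_Pmat (n : ℕ) : (Pmat n).det = 1 := by
  rw [det_of_lowerTriangular (Pmat n) ?_]
  · refine Finset.prod_eq_one fun i _ => ?_
    simp [Pmat]
  · intro i j hij
    have : (i : ℕ) < (j : ℕ) := hij
    simp only [Pmat]
    rw [if_neg (by exact fun h => by omega), if_neg (by omega)]
    ring

set_option maxHeartbeats 2000000 in
lemma gen_conj (n : ℕ) (hn : 2 ≤ n) (q : ℂ) (i : Fin (n - 1)) :
    burauMatrix n q i * Pmat n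
      = Pmat n * Tmat n hn (rBurauMatrix n q i)
          (fun l _ => if (l : ℕ) = (i : ℕ) ∧ (i : ℕ) + 2 = n then 1 else 0) := by
  have hi := i.isLt
  ext j k
  have hj := j.isLt
  have hk := k.isLt
  rw [mul_Pmat, Pmat_mul]
  simp only [Tmat_apply n hn (rBurauMatrix n q i)
    (fun l _ => if (l : ℕ) = (i : ℕ) ∧ (i : ℕ) + 2 = n then 1 else 0), burauMatrix, rBurauMatrix, Fin.ext_iff]
  by_cases h1 : (j : ℕ) = (i : ℕ) <;> by_cases h2 : (j : ℕ) = (i : ℕ) + 1 <;>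
    by_cases h3 : (k : ℕ) = (i : ℕ) <;> by_cases h4 : (k : ℕ) = (i : ℕ) + 1 <;>
    by_cases h5 : (k : ℕ) + 1 = (i : ℕ) <;>
    first
    | omega
    | (simp only [h1, h2, h3, h4, h5, if_true, if_false, eq_self_iff_true, true_and, and_true,
        false_and, and_false, Nat.succ_ne_self, lt_irrefl]
       split_ifs <;> first | rfl | omega | ring)

open Topology in
/-- **Residue of the braid zeta function at `s = 1`.** If `det(I_{n−1} − β^r_{n,q}(w)) ≠ 0`,
then `ζ(s) = det(I_n − s·β_{n,q}(w))⁻¹` has a simple pole at `s = 1`: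
`(s − 1)·ζ(s) → −det(I_{n−1} − β^r_{n,q}(w))⁻¹` as `s → 1`, `s ≠ 1`.
(By Burau's theorem `det(I_{n−1} − β^r_{n,q}(σ)) = [n]_q·Δ_{σ̂}(q)` when the closure
`σ̂` is a knot, so this residue equals `−(1/[n]_q)·Δ_{σ̂}(q)⁻¹`.) -/
theorem braid_zeta_residue (n : ℕ) (hn : 2 ≤ n) (q : ℂ) (hq : q ≠ 0)
    (β : FreeGroup (Fin (n - 1)) →* GL (Fin n) ℂ)
    (hβ : ∀ i, (β (FreeGroup.of i) : Matrix (Fin n) (Fin n) ℂ) = burauMatrix n q i)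
    (βr : FreeGroup (Fin (n - 1)) →* GL (Fin (n - 1)) ℂ)
    (hβr : ∀ i, (βr (FreeGroup.of i) : Matrix (Fin (n - 1)) (Fin (n - 1)) ℂ) = rBurauMatrix n q i)
    (w : FreeGroup (Fin (n - 1)))
    (hw : ((1 : Matrix (Fin (n - 1)) (Fin (n - 1)) ℂ)
        - (βr w : Matrix (Fin (n - 1)) (Fin (n - 1)) ℂ)).det ≠ 0) :
    Filter.Tendsto
      (fun s : ℂ => (s - 1) *
        (((1 : Matrix (Fin n) (Fin n) ℂ) - s • (β w : Matrix (Fin n) (Fin n) ℂ)).det)⁻¹)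
      (𝓝[≠] (1 : ℂ))
      (𝓝 (-(((1 : Matrix (Fin (n - 1)) (Fin (n - 1)) ℂ)
          - (βr w : Matrix (Fin (n - 1)) (Fin (n - 1)) ℂ)).det)⁻¹)) := by
  have key : ∀ w : FreeGroup (Fin (n - 1)), ∃ c : Matrix (Fin (n - 1)) (Fin 1) ℂ,
      (β w : Matrix (Fin n) (Fin n) ℂ) * Pmat n
        = Pmat n * Tmat n hn (βr w : Matrix (Fin (n - 1)) (Fin (n - 1)) ℂ) c := by
    intro w
    induction w using FreeGroup.induction_on with
    | C1 =>
      exact ⟨0, by rw [_root_.map_one, _root_.map_one, Units.val_one, Units.val_one, Tmat_one, one_mul, mul_one]⟩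
    | of x =>
      refine ⟨fun l _ => if (l : ℕ) = (x : ℕ) ∧ (x : ℕ) + 2 = n then 1 else 0, ?_⟩
      rw [hβ, hβr]
      exact gen_conj n hn q x
    | inv_of x ih =>
      obtain ⟨c, hc⟩ := ih
      set A : Matrix (Fin (n - 1)) (Fin (n - 1)) ℂ := ↑(βr (FreeGroup.of x)) with hA
      set A' : Matrix (Fin (n - 1)) (Fin (n - 1)) ℂ := ↑(βr (FreeGroup.of x)⁻¹) with hA'
      set M : Matrix (Fin n) (Fin n) ℂ := ↑(β (FreeGroup.of x)) with hM
      set M' : Matrix (Fin n) (Fin n) ℂ := ↑(β (FreeGroup.of x)⁻¹) with hM'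
      have hAA' : A * A' = 1 := by
        rw [hA, hA', ← Units.val_mul, ← _root_.map_mul, mul_inv_cancel, _root_.map_one, Units.val_one]
      have hMM' : M' * M = 1 := by
        rw [hM, hM', ← Units.val_mul, ← _root_.map_mul, inv_mul_cancel, _root_.map_one, Units.val_one]
      refine ⟨-(A' * c), ?_⟩
      have step : M * (Pmat n * Tmat n hn A' (-(A' * c))) = Pmat n := by
        rw [← mul_assoc, hc, mul_assoc, Tmat_mul]
        have h0 : A * -(A' * c) + c = 0 := by
          rw [Matrix.mul_neg, ← Matrix.mul_assoc, hAA', Matrix.one_mul, neg_add_cancel]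
        rw [hAA', h0, Tmat_one, mul_one]
      calc M' * Pmat n = M' * (M * (Pmat n * Tmat n hn A' (-(A' * c)))) := by rw [step]
        _ = (M' * M) * (Pmat n * Tmat n hn A' (-(A' * c))) := by rw [mul_assoc]
        _ = Pmat n * Tmat n hn A' (-(A' * c)) := by rw [hMM', one_mul]
    | mul x y ihx ihy =>
      obtain ⟨cx, hx⟩ := ihx
      obtain ⟨cy, hy⟩ := ihy
      refine ⟨(βr x : Matrix (Fin (n - 1)) (Fin (n - 1)) ℂ) * cy + cx, ?_⟩
      rw [_root_.map_mul, _root_.map_mul, Units.val_mul, Units.val_mul, mul_assoc, hy, ← mul_assoc, hx,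
        mul_assoc, Tmat_mul]
  have hdet : ∀ s : ℂ, ((1 : Matrix (Fin n) (Fin n) ℂ)
        - s • (β w : Matrix (Fin n) (Fin n) ℂ)).det
      = (1 - s) * ((1 : Matrix (Fin (n - 1)) (Fin (n - 1)) ℂ)
          - s • (βr w : Matrix (Fin (n - 1)) (Fin (n - 1)) ℂ)).det := by
    obtain ⟨c, hc⟩ := key w
    intro s
    have h2 : ((1 : Matrix (Fin n) (Fin n) ℂ) - s • ↑(β w)) * Pmat n
        = Pmat n * ((1 : Matrix (Fin n) (Fin n) ℂ) - s • Tmat n hn (↑(βr w)) c) := by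
      rw [sub_mul, mul_sub, one_mul, mul_one, smul_mul_assoc, hc, mul_smul_comm]
    have h3 := congrArg Matrix.det h2
    rw [det_mul, det_mul, det_Pmat, mul_one, one_mul] at h3
    rw [h3, det_one_sub_smul_Tmat]
    ring
  set g : ℂ → ℂ := fun s => ((1 : Matrix (Fin (n - 1)) (Fin (n - 1)) ℂ)
      - s • (βr w : Matrix (Fin (n - 1)) (Fin (n - 1)) ℂ)).det with hg
  have hgcont : Continuous g := by
    apply Continuous.matrix_det
    exact continuous_const.sub (continuous_id.smul continuous_const)
  have hg1 : g 1 = ((1 : Matrix (Fin (n - 1)) (Fin (n - 1)) ℂ)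
      - (βr w : Matrix (Fin (n - 1)) (Fin (n - 1)) ℂ)).det := by
    rw [hg]
    simp
  have hlim : Filter.Tendsto (fun s => -(g s)⁻¹) (𝓝[≠] (1 : ℂ)) (𝓝 (-(g 1)⁻¹)) :=
    (((hgcont.tendsto 1).inv₀ (by rw [hg1]; exact hw)).neg).mono_left nhdsWithin_le_nhds
  rw [← hg1]
  refine Filter.Tendsto.congr' ?_ hlim
  filter_upwards [self_mem_nhdsWithin] with s hs
  have hs1 : s ≠ (1 : ℂ) := hs
  have h1s : (1 : ℂ) - s ≠ 0 := fun h => hs1 (sub_eq_zero.mp h).symm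
  rw [hdet s, mul_inv, ← mul_assoc]
  have h4 : (s - 1) * ((1 : ℂ) - s)⁻¹ = -1 := by
    rw [show s - 1 = -((1 : ℂ) - s) by ring, neg_mul, mul_inv_cancel₀ h1s]
  rw [h4]
  ring
end

section
/- Let π_n : FreeGroup (Fin (n−1)) → S_n be the homomorphism sending the i-th free generator to the transposition (i, i+1). Let w ∈ FreeGroup (Fin (n−1)) be a word such that π_n(w) is an n-cycle (i.e. a cycle whose support is all of Fin n). Then, specializing the reduced Burau representation at q = 1, det(I_{n−1} − β^r_{n,1}(w)) = n. (Since det(I_{n−1} − β^r_{n,q}(σ)) = [n]_q · Δ_{σ̂}(q) when the closure σ̂ is a knot, and [n]_1 = n, this expresses the fact that the Alexander polynomial of any knot satisfies Δ_{σ̂}(1) = 1.) -/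
open Matrix

noncomputable def permMatC {n : ℕ} (σ : Equiv.Perm (Fin n)) : Matrix (Fin n) (Fin n) ℂ :=
  fun j k => if σ k = j then 1 else 0

lemma permMatC_one {n : ℕ} : permMatC (1 : Equiv.Perm (Fin n)) = 1 := by
  ext j k
  simp [permMatC, Matrix.one_apply, eq_comm]

lemma permMatC_mul {n : ℕ} (σ τ : Equiv.Perm (Fin n)) :
    permMatC (σ * τ) = permMatC σ * permMatC τ := by
  ext j k
  rw [Matrix.mul_apply, Finset.sum_eq_single (τ k)]
  · simp [permMatC]
    congr
  · intro m _ hm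
    simp [permMatC, Ne.symm hm]
  · simp

lemma permMatC_mul_apply {n : ℕ} (σ : Equiv.Perm (Fin n)) (A : Matrix (Fin n) (Fin n) ℂ)
    (j k : Fin n) : (permMatC σ * A) j k = A (σ⁻¹ j) k := by
  rw [Matrix.mul_apply, Finset.sum_eq_single (σ⁻¹ j)]
  · simp [permMatC]
  · intro m _ hm
    have : ¬ σ m = j := by
      intro h
      exact hm (by rw [← h]; simp)
    simp [permMatC, this]
  · simp

def eEquiv {n : ℕ} (hn : 1 ≤ n) : Fin (n - 1) ⊕ Fin 1 ≃ Fin n :=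
  finSumFinEquiv.trans (finCongr (by omega))

lemma eEquiv_symm_of_lt {n : ℕ} (hn : 1 ≤ n) {j : Fin n} (hj : (j : ℕ) < n - 1) :
    (eEquiv hn).symm j = Sum.inl ⟨j, hj⟩ := by
  rw [Equiv.symm_apply_eq]
  simp [eEquiv, Fin.ext_iff]

lemma eEquiv_symm_of_ge {n : ℕ} (hn : 1 ≤ n) {j : Fin n} (hj : ¬ (j : ℕ) < n - 1) :
    (eEquiv hn).symm j = Sum.inr 0 := by
  rw [Equiv.symm_apply_eq]
  have := j.isLt
  simp [eEquiv, Fin.ext_iff]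
  omega

noncomputable def extM {n : ℕ} (hn : 1 ≤ n) (B : Matrix (Fin (n - 1)) (Fin (n - 1)) ℂ) :
    Matrix (Fin n) (Fin n) ℂ :=
  Matrix.reindex (eEquiv hn) (eEquiv hn) (Matrix.fromBlocks B 0 0 1)

lemma extM_one {n : ℕ} (hn : 1 ≤ n) : extM hn (1 : Matrix (Fin (n-1)) (Fin (n-1)) ℂ) = 1 := by
  rw [extM, Matrix.fromBlocks_one]
  simp [Matrix.reindex_apply, Matrix.submatrix_one_equiv]

lemma extM_mul {n : ℕ} (hn : 1 ≤ n) (B B' : Matrix (Fin (n-1)) (Fin (n-1)) ℂ) :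
    extM hn (B * B') = extM hn B * extM hn B' := by
  simp only [extM, Matrix.reindex_apply]
  rw [Matrix.submatrix_mul_equiv, Matrix.fromBlocks_multiply]
  simp

lemma extM_apply {n : ℕ} (hn : 1 ≤ n) (B : Matrix (Fin (n-1)) (Fin (n-1)) ℂ) (j k : Fin n) :
    extM hn B j k =
      if hj : (j : ℕ) < n - 1 then
        (if hk : (k : ℕ) < n - 1 then B ⟨j, hj⟩ ⟨k, hk⟩ else 0)
      else if (j : ℕ) = (k : ℕ) then 1 else 0 := by
  have hjlt := j.isLt
  have hklt := k.isLt
  by_cases hj : (j:ℕ) < n - 1 <;> by_cases hk : (k:ℕ) < n - 1 <;>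
    simp [extM, Matrix.reindex_apply, Matrix.submatrix_apply,
      eEquiv_symm_of_lt hn, eEquiv_symm_of_ge hn, hj, hk, Matrix.one_apply]
  · omega
  · omega

noncomputable def Mhat (n : ℕ) : Matrix (Fin n) (Fin n) ℂ := fun j k =>
  if (k : ℕ) = n - 1 then 1
  else if (j : ℕ) = (k : ℕ) then 1
  else if (j : ℕ) = (k : ℕ) + 1 then -1
  else 0

noncomputable def Nhat (n : ℕ) : Matrix (Fin n) (Fin n) ℂ := fun j k =>
  if (j : ℕ) = n - 1 then 1 / (n : ℂ)
  else (if (k : ℕ) ≤ (j : ℕ) then 1 else 0) - (((j : ℕ) : ℂ) + 1) / (n : ℂ)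

lemma Mhat_mul_Nhat {n : ℕ} (hn : 2 ≤ n) : Mhat n * Nhat n = 1 := by
  have hnC : (n : ℂ) ≠ 0 := Nat.cast_ne_zero.mpr (by omega)
  ext j k
  rw [Matrix.mul_apply]
  have hjlt := j.isLt
  have hklt := k.isLt
  rw [Matrix.one_apply]
  by_cases hj : (j : ℕ) = n - 1
  · -- last row
    have hrow : ∀ m : Fin n, Mhat n j m * Nhat n m k =
        (if m = (⟨n-1, by omega⟩ : Fin n) then Nhat n m k else 0)
          + (if m = (⟨n-2, by omega⟩ : Fin n) then -(Nhat n m k) else 0) := by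
      intro m
      have hmlt := m.isLt
      simp only [Mhat, Fin.ext_iff]
      split_ifs <;> first | ring1 | omega | (exfalso; omega)
    rw [Finset.sum_congr rfl fun m _ => hrow m, Finset.sum_add_distrib]
    simp only [Finset.sum_ite_eq', Finset.mem_univ, if_true]
    have c2 : ((n - 2 : ℕ) : ℂ) = (n : ℂ) - 2 := by
      rw [Nat.cast_sub (by omega : 2 ≤ n)]; norm_num
    simp only [Nhat, Fin.ext_iff, Fin.val_mk, c2]
    split_ifs <;> first | omega | (exfalso; omega) | (field_simp <;> ring1)
  · by_cases hj0 : (j : ℕ) = 0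
    · -- first row
      have hrow : ∀ m : Fin n, Mhat n j m * Nhat n m k =
          (if m = (⟨n-1, by omega⟩ : Fin n) then Nhat n m k else 0)
            + (if m = j then Nhat n m k else 0) := by
        intro m
        have hmlt := m.isLt
        simp only [Mhat, Fin.ext_iff]
        split_ifs <;> first | ring1 | omega | (exfalso; omega)
      rw [Finset.sum_congr rfl fun m _ => hrow m, Finset.sum_add_distrib]
      simp only [Finset.sum_ite_eq', Finset.mem_univ, if_true]
      simp only [Nhat, Fin.ext_iff, Fin.val_mk, hj0, Nat.cast_zero]
      split_ifs <;> first | omega | (exfalso; omega) | (field_simp <;> ring1)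
    · -- middle row
      have hrow : ∀ m : Fin n, Mhat n j m * Nhat n m k =
          (if m = (⟨n-1, by omega⟩ : Fin n) then Nhat n m k else 0)
            + ((if m = j then Nhat n m k else 0)
            + (if m = (⟨(j:ℕ)-1, by omega⟩ : Fin n) then -(Nhat n m k) else 0)) := by
        intro m
        have hmlt := m.isLt
        simp only [Mhat, Fin.ext_iff]
        split_ifs <;> first | ring1 | omega | (exfalso; omega)
      rw [Finset.sum_congr rfl fun m _ => hrow m, Finset.sum_add_distrib,
        Finset.sum_add_distrib]
      simp only [Finset.sum_ite_eq', Finset.mem_univ, if_true]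
      have c3 : (((j:ℕ) - 1 : ℕ) : ℂ) = ((j:ℕ) : ℂ) - 1 := by
        rw [Nat.cast_sub (by omega : 1 ≤ (j:ℕ))]; norm_num
      simp only [Nhat, Fin.ext_iff, Fin.val_mk, c3]
      split_ifs <;> first | omega | (exfalso; omega) | (field_simp <;> ring1)

set_option maxHeartbeats 1000000 in
lemma gen_rel {n : ℕ} (hn : 2 ≤ n) (i : Fin (n-1)) (a b : Fin n)
    (ha : (a : ℕ) = (i : ℕ)) (hb : (b : ℕ) = (i : ℕ) + 1) :
    permMatC (Equiv.swap a b) * Mhat n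
      = Mhat n * extM (by omega) (rBurauMatrix n 1 i) := by
  have h1n : (1 : ℕ) ≤ n := by omega
  have hi := i.isLt
  ext j k
  rw [permMatC_mul_apply, Equiv.swap_inv, Matrix.mul_apply]
  have hdec : ∀ m : Fin n, Mhat n j m * extM h1n (rBurauMatrix n 1 i) m k
      = (if m = k then Mhat n j m else 0)
        + (if m = a then
            Mhat n j a * (extM h1n (rBurauMatrix n 1 i) a k - (if a = k then 1 else 0))
          else 0) := by
    intro m
    by_cases hma : m = a
    · subst hma
      by_cases hmk : m = k
      · subst hmk
        simp only [eq_self_iff_true, if_true]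
        ring
      · simp only [eq_self_iff_true, if_true, hmk, if_false]
        ring
    · have hma' : (m : ℕ) ≠ (i : ℕ) := fun h => hma (Fin.ext (by rw [ha]; exact h))
      have hEmk : extM h1n (rBurauMatrix n 1 i) m k = if m = k then 1 else 0 := by
        have hm := m.isLt
        have hk := k.isLt
        rw [extM_apply]
        simp only [rBurauMatrix, Fin.ext_iff, Fin.val_mk]
        split_ifs <;> first | rfl | omega | (exfalso; omega)
      rw [hEmk, if_neg hma]
      by_cases hmk : m = k <;> simp [hmk]
  rw [Finset.sum_congr rfl fun m _ => hdec m, Finset.sum_add_distrib]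
  simp only [Finset.sum_ite_eq', Finset.mem_univ, if_true]
  rw [Equiv.swap_apply_def]
  have hj := j.isLt
  have hk := k.isLt
  have hia := a.isLt
  have hib := b.isLt
  rw [extM_apply, dif_pos (show (a : ℕ) < n - 1 by omega)]
  by_cases hkn : (k : ℕ) < n - 1
  · rw [dif_pos hkn]
    by_cases hja : j = a <;> by_cases hjb : j = b
    · exfalso
      have h1 := congrArg Fin.val hja
      have h2 := congrArg Fin.val hjb
      omega
    · have hja' : (j : ℕ) = (i : ℕ) := by rw [← ha]; exact congrArg Fin.val hja
      rw [if_pos hja]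
      simp only [Mhat, rBurauMatrix, Fin.ext_iff, Fin.val_mk, ha, hb, hja',
        eq_false (show ¬ (k : ℕ) = n - 1 by omega), if_false]
      split_ifs <;> first | ring1 | omega | (exfalso; omega)
    · have hjb' : (j : ℕ) = (i : ℕ) + 1 := by rw [← hb]; exact congrArg Fin.val hjb
      rw [if_neg hja, if_pos hjb]
      simp only [Mhat, rBurauMatrix, Fin.ext_iff, Fin.val_mk, ha, hb, hjb',
        eq_false (show ¬ (k : ℕ) = n - 1 by omega), if_false]
      split_ifs <;> first | ring1 | omega | (exfalso; omega)
    · have hja' : ¬ (j : ℕ) = (i : ℕ) := fun h => hja (Fin.ext (by omega))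
      have hjb' : ¬ (j : ℕ) = (i : ℕ) + 1 := fun h => hjb (Fin.ext (by omega))
      rw [if_neg hja, if_neg hjb]
      simp only [Mhat, rBurauMatrix, Fin.ext_iff, Fin.val_mk, ha, hb,
        eq_false (show ¬ (k : ℕ) = n - 1 by omega), if_false,
        eq_false hja', eq_false hjb']
      split_ifs <;> first | ring1 | omega | (exfalso; omega)
  · rw [dif_neg hkn]
    rw [if_neg (show ¬ a = k from fun h => by have := congrArg Fin.val h; omega)]
    have hM : ∀ r : Fin n, Mhat n r k = 1 := by
      intro r
      simp only [Mhat]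
      rw [if_pos (by omega)]
    rw [hM, hM]
    ring

lemma det_cycle {n : ℕ} (hn : 2 ≤ n) (σ : Equiv.Perm (Fin n)) (hc : σ.IsCycle)
    (hs : σ.support = Finset.univ) (x : ℂ) :
    (x • (1 : Matrix (Fin n) (Fin n) ℂ) - permMatC σ).det = x ^ n - 1 := by
  have hfix : ∀ j, σ j ≠ j := fun j =>
    Equiv.Perm.mem_support.mp (by rw [hs]; exact Finset.mem_univ j)
  have hσ1 : σ ≠ 1 := by
    intro h
    exact hfix ⟨0, by omega⟩ (by rw [h]; rfl)
  obtain ⟨c, hc1, hc2⟩ := hc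
  have hsame : ∀ p q : Fin n, σ.SameCycle p q := fun p q =>
    ((hc2 (hfix p)).symm.trans (hc2 (hfix q)))
  have key : ∀ τ : Equiv.Perm (Fin n), (∀ m, τ m = m ∨ τ m = σ m) → τ = 1 ∨ τ = σ := by
    intro τ hτ
    by_cases h1 : τ = 1
    · exact Or.inl h1
    right
    obtain ⟨m₀, hm₀⟩ : ∃ m, τ m ≠ m := by
      by_contra h
      push_neg at h
      exact h1 (Equiv.ext h)
    have hm₀' : τ m₀ = σ m₀ := (hτ m₀).resolve_left hm₀
    have stepUp : ∀ m, τ m = σ m → τ (σ m) = σ (σ m) := by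
      intro m hm
      rcases hτ (σ m) with h | h
      · exact absurd (τ.injective (h.trans hm.symm)) (hfix m)
      · exact h
    have stepDown : ∀ m, τ m = σ m → τ (σ⁻¹ m) = σ (σ⁻¹ m) := by
      intro m hm
      rcases hτ (σ⁻¹ m) with h | h
      · exfalso
        obtain ⟨p, hp⟩ : ∃ p, τ p = m := ⟨τ⁻¹ m, by simp⟩
        rcases hτ p with h2 | h2
        · -- τ p = p, so p = m, τ m = m, contradiction with τ m = σ m ≠ m
          rw [h2] at hp
          subst hp
          rw [hm] at h2
          exact hfix p h2
        · have hσp : σ p = m := h2.symm.trans hp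
          have hps : p = σ⁻¹ m := by rw [← hσp]; simp
          rw [← hps] at h
          have hpm : p = m := h.symm.trans hp
          rw [hpm] at hps
          exact hfix m ((congrArg σ hps).trans (σ.apply_symm_apply m))
      · exact h
    have stepZ : ∀ z : ℤ, τ ((σ ^ z) m₀) = σ ((σ ^ z) m₀) := by
      intro z
      induction z using Int.induction_on with
      | zero => simpa using hm₀'
      | succ w hw =>
        have h2 := stepUp _ hw
        have h3 : (σ ^ ((w : ℤ) + 1)) m₀ = σ ((σ ^ (w : ℤ)) m₀) := by
          rw [add_comm, _root_.zpow_add, zpow_one]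
          rfl
        rw [h3]
        exact h2
      | pred w hw =>
        have h2 := stepDown _ hw
        have h3 : (σ ^ (-(w : ℤ) - 1)) m₀ = σ⁻¹ ((σ ^ (-(w : ℤ))) m₀) := by
          rw [sub_eq_add_neg, add_comm, _root_.zpow_add, _root_.zpow_neg_one]
          rfl
        rw [h3]
        exact h2
    apply Equiv.ext
    intro m
    obtain ⟨z, hz⟩ := hsame m₀ m
    rw [← hz]
    exact stepZ z
  rw [Matrix.det_apply]
  have hzero : ∀ τ ∈ (Finset.univ : Finset (Equiv.Perm (Fin n))),
      τ ∉ ({1, σ} : Finset (Equiv.Perm (Fin n))) →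
      Equiv.Perm.sign τ • ∏ m, (x • (1 : Matrix (Fin n) (Fin n) ℂ) - permMatC σ) (τ m) m = 0 := by
    intro τ _ hτ
    rw [Finset.mem_insert, Finset.mem_singleton] at hτ
    push_neg at hτ
    have : ¬ ∀ m, τ m = m ∨ τ m = σ m := by
      intro hh
      rcases key τ hh with h | h
      · exact hτ.1 h
      · exact hτ.2 h
    push_neg at this
    obtain ⟨m, hm1, hm2⟩ := this
    rw [Finset.prod_eq_zero (Finset.mem_univ m) (by
      simp [Matrix.sub_apply, Matrix.smul_apply, Matrix.one_apply, permMatC, hm1, Ne.symm hm2]), smul_zero]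
  rw [← Finset.sum_subset (Finset.subset_univ ({1, σ} : Finset (Equiv.Perm (Fin n)))) hzero]
  rw [Finset.sum_insert (by simp [Ne.symm hσ1]), Finset.sum_singleton]
  have hterm1 : Equiv.Perm.sign (1 : Equiv.Perm (Fin n)) •
      ∏ m, (x • (1 : Matrix (Fin n) (Fin n) ℂ) - permMatC σ) ((1 : Equiv.Perm (Fin n)) m) m = x ^ n := by
    have hentry : ∀ m : Fin n, (x • (1 : Matrix (Fin n) (Fin n) ℂ) - permMatC σ)
        ((1 : Equiv.Perm (Fin n)) m) m = x := by
      intro m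
      simp [Matrix.sub_apply, Matrix.smul_apply, Matrix.one_apply, permMatC, hfix m]
    rw [Finset.prod_congr rfl fun m _ => hentry m]
    simp [Finset.prod_const]
  have hterm2 : Equiv.Perm.sign σ •
      ∏ m, (x • (1 : Matrix (Fin n) (Fin n) ℂ) - permMatC σ) (σ m) m = -1 := by
    have hentry : ∀ m : Fin n, (x • (1 : Matrix (Fin n) (Fin n) ℂ) - permMatC σ) (σ m) m = -1 := by
      intro m
      simp [Matrix.sub_apply, Matrix.smul_apply, Matrix.one_apply, permMatC, hfix m]
    rw [Finset.prod_congr rfl fun m _ => hentry m]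
    have hsign : Equiv.Perm.sign σ = (-(-1) ^ n : ℤˣ) := by
      rw [Equiv.Perm.IsCycle.sign ⟨c, hc1, hc2⟩, hs, Finset.card_univ, Fintype.card_fin]
    rw [hsign, Finset.prod_const, Finset.card_univ, Fintype.card_fin]
    have hcast : ((-(-1) ^ n : ℤˣ) : ℤ) = -(-1) ^ n := by push_cast; ring
    rw [Units.smul_def, hcast, zsmul_eq_mul]
    push_cast
    rw [neg_mul, ← mul_pow]
    norm_num
  rw [hterm1, hterm2]
  ring

lemma det_ext_sub {n : ℕ} (hn : 1 ≤ n) (B : Matrix (Fin (n-1)) (Fin (n-1)) ℂ) (x : ℂ) :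
    (x • (1 : Matrix (Fin n) (Fin n) ℂ) - extM hn B).det
      = (x • (1 : Matrix (Fin (n-1)) (Fin (n-1)) ℂ) - B).det * (x - 1) := by
  have h1 : x • (1 : Matrix (Fin n) (Fin n) ℂ) - extM hn B
      = Matrix.reindex (eEquiv hn) (eEquiv hn)
          (x • (1 : Matrix (Fin (n-1) ⊕ Fin 1) (Fin (n-1) ⊕ Fin 1) ℂ)
            - Matrix.fromBlocks B 0 0 1) := by
    ext j k
    simp only [extM, Matrix.reindex_apply, Matrix.submatrix_apply, Matrix.sub_apply,
      Matrix.smul_apply, Matrix.one_apply, smul_eq_mul, EmbeddingLike.apply_eq_iff_eq]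
  rw [h1]
  rw [show x • (1 : Matrix (Fin (n-1) ⊕ Fin 1) (Fin (n-1) ⊕ Fin 1) ℂ)
        - Matrix.fromBlocks B 0 0 1
      = Matrix.fromBlocks (x • 1 - B) 0 0 (x • 1 - 1) from by
    ext j k
    rcases j with j | j <;> rcases k with k | k <;>
      simp [Matrix.fromBlocks, Matrix.one_apply, Matrix.sub_apply, Matrix.smul_apply]]
  rw [Matrix.det_reindex_self, Matrix.det_fromBlocks_zero₂₁]
  congr 1
  rw [Matrix.det_fin_one]
  simp [Matrix.sub_apply, Matrix.smul_apply, Matrix.one_apply]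

lemma eval_charpoly' {N : Type*} [DecidableEq N] [Fintype N] (M : Matrix N N ℂ) (x : ℂ) :
    M.charpoly.eval x = (x • (1 : Matrix N N ℂ) - M).det := by
  rw [Matrix.charpoly]
  rw [show Polynomial.eval x (Matrix.charmatrix M).det
      = (Polynomial.evalRingHom x) (Matrix.charmatrix M).det from rfl]
  rw [RingHom.map_det]
  congr 1
  ext j k
  by_cases h : j = k
  · subst h
    simp [Matrix.charmatrix_apply_eq, Matrix.smul_apply, Matrix.one_apply]
  · simp [Matrix.charmatrix_apply_ne _ _ _ h, Matrix.one_apply, h]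

/-- **`Δ_{σ̂}(1) = 1`.** If `π_n(w)` is an `n`-cycle, then the reduced Burau
representation specialized at `q = 1` satisfies `det(I_{n−1} − β^r_{n,1}(w)) = n`. -/
theorem reduced_burau_det_at_one (n : ℕ) (hn : 2 ≤ n)
    (π : FreeGroup (Fin (n - 1)) →* Equiv.Perm (Fin n))
    (hπ : ∀ i : Fin (n - 1),
      π (FreeGroup.of i) =
        Equiv.swap ⟨i, by have := i.isLt; omega⟩ ⟨(i : ℕ) + 1, by have := i.isLt; omega⟩)
    (βr : FreeGroup (Fin (n - 1)) →* GL (Fin (n - 1)) ℂ)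
    (hβr : ∀ i, (βr (FreeGroup.of i) : Matrix (Fin (n - 1)) (Fin (n - 1)) ℂ)
        = rBurauMatrix n 1 i)
    (w : FreeGroup (Fin (n - 1)))
    (hw : (π w).IsCycle ∧ (π w).support = Finset.univ) :
    ((1 : Matrix (Fin (n - 1)) (Fin (n - 1)) ℂ)
        - (βr w : Matrix (Fin (n - 1)) (Fin (n - 1)) ℂ)).det = n := by
  have h1n : (1 : ℕ) ≤ n := by omega
  have key : ∀ v : FreeGroup (Fin (n-1)),
      permMatC (π v) * Mhat n
        = Mhat n * extM h1n ((βr v : Matrix (Fin (n-1)) (Fin (n-1)) ℂ)) := by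
    intro v
    refine FreeGroup.induction_on v ?_ ?_ ?_ ?_
    · rw [_root_.map_one, _root_.map_one, permMatC_one, Units.val_one, extM_one, one_mul, mul_one]
    · intro x
      have hpx : (pure x : FreeGroup (Fin (n-1))) = FreeGroup.of x := rfl
      rw [hπ, hβr]
      exact gen_rel hn x _ _ rfl rfl
    · intro x hx
      have hpx : (pure x : FreeGroup (Fin (n-1))) = FreeGroup.of x := rfl
      have hPP : permMatC (π (FreeGroup.of x)⁻¹) * permMatC (π (FreeGroup.of x)) = 1 := by
        rw [← permMatC_mul, ← _root_.map_mul, inv_mul_cancel, _root_.map_one, permMatC_one]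
      have hEE : extM h1n ((βr (FreeGroup.of x) : Matrix (Fin (n-1)) (Fin (n-1)) ℂ))
          * extM h1n ((βr (FreeGroup.of x)⁻¹ : Matrix (Fin (n-1)) (Fin (n-1)) ℂ)) = 1 := by
        rw [← extM_mul, ← Units.val_mul, ← _root_.map_mul, mul_inv_cancel, _root_.map_one, Units.val_one,
          extM_one]
      have h3 : permMatC (π (FreeGroup.of x))
          * (Mhat n * extM h1n ((βr (FreeGroup.of x)⁻¹ : Matrix (Fin (n-1)) (Fin (n-1)) ℂ)))
          = Mhat n := by
        rw [← mul_assoc, hx, mul_assoc, hEE, mul_one]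
      conv_lhs => rw [← h3]
      rw [← mul_assoc, hPP, one_mul]
    · intro u v hu hv
      rw [_root_.map_mul, _root_.map_mul, permMatC_mul, Units.val_mul, extM_mul,
        mul_assoc, hv, ← mul_assoc, hu, mul_assoc]
  have hdetM : (Mhat n).det ≠ 0 := by
    intro h
    have h2 := Matrix.det_mul (Mhat n) (Nhat n)
    rw [Mhat_mul_Nhat hn, h, zero_mul, Matrix.det_one] at h2
    exact one_ne_zero h2
  have hpoint : ∀ x : ℂ,
      (x • (1 : Matrix (Fin (n-1)) (Fin (n-1)) ℂ)
        - (βr w : Matrix (Fin (n-1)) (Fin (n-1)) ℂ)).det * (x - 1) = x ^ n - 1 := by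
    intro x
    have hrel : (x • (1 : Matrix (Fin n) (Fin n) ℂ) - permMatC (π w)) * Mhat n
        = Mhat n * (x • (1 : Matrix (Fin n) (Fin n) ℂ)
            - extM h1n ((βr w : Matrix (Fin (n-1)) (Fin (n-1)) ℂ))) := by
      rw [sub_mul, mul_sub, key w, smul_mul_assoc, one_mul, mul_smul_comm, mul_one]
    have hdet := congrArg Matrix.det hrel
    rw [Matrix.det_mul, Matrix.det_mul, det_cycle hn (π w) hw.1 hw.2 x,
      det_ext_sub h1n _ x, mul_comm (x ^ n - 1) ((Mhat n).det)] at hdet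
    exact (mul_left_cancel₀ hdetM hdet).symm
  have hpq : ((βr w : Matrix (Fin (n-1)) (Fin (n-1)) ℂ)).charpoly * (Polynomial.X - 1)
      = (∑ i ∈ Finset.range n, (Polynomial.X : Polynomial ℂ) ^ i) * (Polynomial.X - 1) := by
    apply Polynomial.funext
    intro r
    rw [Polynomial.eval_mul, Polynomial.eval_mul, eval_charpoly']
    simp only [Polynomial.eval_sub, Polynomial.eval_X, Polynomial.eval_one,
      Polynomial.eval_finset_sum, Polynomial.eval_pow]
    rw [hpoint r, geom_sum_mul]
  have hXne : (Polynomial.X - 1 : Polynomial ℂ) ≠ 0 := by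
    simpa using Polynomial.X_sub_C_ne_zero (1 : ℂ)
  have hcp : ((βr w : Matrix (Fin (n-1)) (Fin (n-1)) ℂ)).charpoly
      = ∑ i ∈ Finset.range n, (Polynomial.X : Polynomial ℂ) ^ i :=
    mul_right_cancel₀ hXne hpq
  have hfin : ((1 : Matrix (Fin (n-1)) (Fin (n-1)) ℂ)
      - (βr w : Matrix (Fin (n-1)) (Fin (n-1)) ℂ)).det
      = ((βr w : Matrix (Fin (n-1)) (Fin (n-1)) ℂ)).charpoly.eval 1 := by
    rw [eval_charpoly', one_smul]
  rw [hfin, hcp]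
  simp [Polynomial.eval_finset_sum]
end

section
/- Let n ≥ 2 and m ∈ ℤ with gcd(n, |m|) = 1. Then for every q ∈ ℂ with q ≠ 0 and every s ∈ ℂ, (1 − q^m s) · det(I_n − s · T_{n,m}) = (1 − s)(1 − q^{nm} s^n). Equivalently, the braid zeta function of the torus type braid satisfies ζ(s, σ_{n,m}; β_{n,q}) = (1 − q^m s) / ((1 − s)(1 − q^{nm} s^n)). -/
open Matrix

/-- The Burau image `B_1 B_2 ⋯ B_{n−1}` of the braid `σ_1 σ_2 ⋯ σ_{n−1}`. -/
noncomputable def burauProd (n : ℕ) (q : ℂ) : Matrix (Fin n) (Fin n) ℂ :=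
  ((List.finRange (n - 1)).map (burauMatrix n q)).prod

/-- The torus type braid matrix `T_{n,m} = (B_1 ⋯ B_{n−1})^m`, the Burau image of
`σ_{n,m} = (σ_1⋯σ_{n−1})^m`. -/
noncomputable def torusBurau (n : ℕ) (q : ℂ) (m : ℤ) : Matrix (Fin n) (Fin n) ℂ :=
  burauProd n q ^ m

noncomputable def ppMat (n : ℕ) (q : ℂ) (k : ℕ) : Matrix (Fin n) (Fin n) ℂ := fun i j =>
  if (i : ℕ) = 0 then (if (j : ℕ) < k then 1 - q else if (j : ℕ) = k then 1 else 0)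
  else if (i : ℕ) ≤ k then (if (j : ℕ) + 1 = (i : ℕ) then q else 0)
  else (if i = j then 1 else 0)

lemma ppMat_zero (n : ℕ) (q : ℂ) : ppMat n q 0 = 1 := by
  ext i j
  simp only [ppMat, Matrix.one_apply, Fin.ext_iff]
  split_ifs <;> first | rfl | omega

lemma stdBasis_apply' {N : ℕ} (a b : Fin N) (c : ℂ) (i j : Fin N) :
    Matrix.single a b c i j = if (i : ℕ) = (a : ℕ) ∧ (j : ℕ) = (b : ℕ) then c else 0 := by
  simp only [Matrix.single, Matrix.of_apply]
  congr 1
  simp [Fin.ext_iff, eq_comm]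

lemma mul_std {N : ℕ} (M : Matrix (Fin N) (Fin N) ℂ) (a b : Fin N) (c : ℂ) (i j : Fin N) :
    (M * Matrix.single a b c) i j = if (j : ℕ) = (b : ℕ) then M i a * c else 0 := by
  rcases eq_or_ne j b with h | h
  · subst h
    rw [if_pos rfl, Matrix.mul_single_apply_same]
  · rw [if_neg (fun hh => h (Fin.ext hh))]
    exact Matrix.mul_single_apply_of_ne (c := c) a b i j h M

lemma burau_eq (n : ℕ) (q : ℂ) (k : ℕ) (hk : k < n - 1) :
    burauMatrix n q ⟨k, hk⟩ =
      1 + Matrix.single (⟨k, by omega⟩ : Fin n) ⟨k, by omega⟩ (-q)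
        + Matrix.single (⟨k, by omega⟩ : Fin n) ⟨k+1, by omega⟩ 1
        + Matrix.single (⟨k+1, by omega⟩ : Fin n) ⟨k, by omega⟩ q
        + Matrix.single (⟨k+1, by omega⟩ : Fin n) ⟨k+1, by omega⟩ (-1) := by
  ext i j
  simp only [burauMatrix, Matrix.add_apply, Matrix.one_apply, stdBasis_apply', Fin.ext_iff,
    Fin.val_mk]
  split_ifs <;> try ring
  all_goals exfalso
  all_goals omega

lemma ppMat_step (n : ℕ) (q : ℂ) (k : ℕ) (hk : k < n - 1) :
    ppMat n q k * burauMatrix n q ⟨k, hk⟩ = ppMat n q (k + 1) := by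
  rw [burau_eq n q k hk]; simp only [mul_add, mul_one]
  ext i j
  simp only [Matrix.add_apply, mul_std, Fin.val_mk, ppMat, Fin.ext_iff]
  split_ifs <;> try ring
  all_goals exfalso
  all_goals omega

lemma burauProd_eq_ppMat (n : ℕ) (q : ℂ) : burauProd n q = ppMat n q (n - 1) := by
  suffices h : ∀ k ≤ n - 1,
      (((List.finRange (n - 1)).take k).map (burauMatrix n q)).prod = ppMat n q k by
    have := h (n - 1) le_rfl
    rwa [List.take_of_length_le (by simp)] at this
  intro k hk
  induction k with
  | zero => simp [ppMat_zero]
  | succ k ih =>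
    have hk' : k < n - 1 := by omega
    rw [List.take_succ, List.map_append, List.prod_append]
    have : (List.finRange (n - 1))[k]? = some ⟨k, hk'⟩ := by
      rw [List.getElem?_eq_getElem (by simpa using hk')]
      simp
    rw [this]
    simp only [Option.toList_some, List.map_cons, List.map_nil, List.prod_cons, List.prod_nil,
      mul_one]
    rw [ih (by omega), ppMat_step]

variable {n : ℕ}

noncomputable def shiftM (n : ℕ) (a : ZMod n) : Matrix (ZMod n) (ZMod n) ℂ :=
  fun x y => if y = x + a then 1 else 0

noncomputable def onesRow (n : ℕ) : Matrix Unit (ZMod n) ℂ := replicateRow Unit (fun _ => (1:ℂ))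

section shift
variable [NeZero n]

lemma shiftM_zero : shiftM n 0 = 1 := by
  ext x y
  simp [shiftM, Matrix.one_apply, eq_comm]

lemma shiftM_mul (a b : ZMod n) : shiftM n a * shiftM n b = shiftM n (a + b) := by
  ext x y
  rw [Matrix.mul_apply]
  have h : ∀ z, shiftM n a x z * shiftM n b z y
      = if z = x + a then (if y = z + b then (1:ℂ) else 0) else 0 := by
    intro z
    simp only [shiftM]
    split_ifs <;> ring
  rw [Finset.sum_congr rfl (fun z _ => h z), Finset.sum_ite_eq' Finset.univ (x+a)]
  simp [shiftM, add_assoc]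

lemma rowOne_mul_shiftM (a : ZMod n) : onesRow n * shiftM n a = onesRow n := by
  ext u y
  rw [Matrix.mul_apply]
  have h : ∀ z, onesRow n u z * shiftM n a z y = if z = y - a then (1:ℂ) else 0 := by
    intro z
    have : (y = z + a) ↔ (z = y - a) := by
      rw [eq_sub_iff_add_eq, eq_comm]
    simp only [shiftM, onesRow, replicateRow_apply, one_mul, this]
  rw [Finset.sum_congr rfl (fun z _ => h z), Finset.sum_ite_eq' Finset.univ (y - a)]
  simp [onesRow]

lemma shiftM_mul_col (a : ZMod n) (w : ZMod n → ℂ) :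
    shiftM n a * replicateCol Unit w = replicateCol Unit (fun x => w (x + a)) := by
  ext x u
  rw [Matrix.mul_apply]
  have h : ∀ z, shiftM n a x z * replicateCol Unit w z u = if z = x + a then w z else 0 := by
    intro z
    simp only [shiftM, replicateCol_apply, ite_mul, one_mul, zero_mul]
  rw [Finset.sum_congr rfl (fun z _ => h z), Finset.sum_ite_eq' Finset.univ (x+a)]
  simp

lemma rowOne_mul_col (w : ZMod n → ℂ) :
    onesRow n * replicateCol Unit w = (∑ x, w x) • (1 : Matrix Unit Unit ℂ) := by
  ext u v
  rw [onesRow, replicateRow_mul_replicateCol_apply]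
  simp [dotProduct, Matrix.one_apply]

/-- the structural predicate: `M = c • shiftM a + (rank one) col u * row 1` with `∑ u = 1 - c`. -/
def GoodM (c : ℂ) (a : ZMod n) (M : Matrix (ZMod n) (ZMod n) ℂ) : Prop :=
  ∃ u : ZMod n → ℂ, (∑ x, u x) = 1 - c ∧
    M = c • shiftM n a + replicateCol Unit u * onesRow n

lemma goodM_one : GoodM (1:ℂ) (0 : ZMod n) 1 := by
  refine ⟨0, by simp, ?_⟩
  simp [shiftM_zero, Matrix.replicateCol_zero]

lemma sum_shift (a : ZMod n) (w : ZMod n → ℂ) : (∑ x, w (x + a)) = ∑ x, w x :=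
  Fintype.sum_equiv (Equiv.addRight a) _ _ (fun x => rfl)

lemma goodM_mul {c d : ℂ} {a b : ZMod n} {M N : Matrix (ZMod n) (ZMod n) ℂ}
    (hM : GoodM c a M) (hN : GoodM d b N) : GoodM (c * d) (a + b) (M * N) := by
  obtain ⟨u, hu, rfl⟩ := hM
  obtain ⟨w, hw, rfl⟩ := hN
  refine ⟨c • (fun x => w (x + a)) + (d + ∑ x, w x) • u, ?_, ?_⟩
  · simp only [Finset.sum_add_distrib, Pi.smul_apply, smul_eq_mul, Pi.add_apply,
      ← Finset.mul_sum]
    rw [sum_shift a w, hu, hw]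
    ring
  · rw [add_mul, mul_add, mul_add]
    have e1 : c • shiftM n a * (d • shiftM n b) = (c * d) • shiftM n (a + b) := by
      rw [Matrix.smul_mul, Matrix.mul_smul, shiftM_mul, smul_smul]
    have e2 : c • shiftM n a * (replicateCol Unit w * onesRow n)
        = replicateCol Unit (c • fun x => w (x + a)) * onesRow n := by
      rw [← Matrix.mul_assoc, Matrix.smul_mul, shiftM_mul_col, replicateCol_smul, Matrix.smul_mul]
    have e3 : replicateCol Unit u * onesRow n * (d • shiftM n b) = d • (replicateCol Unit u * onesRow n) := by
      rw [Matrix.mul_smul, Matrix.mul_assoc, rowOne_mul_shiftM]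
    have e4 : replicateCol Unit u * onesRow n * (replicateCol Unit w * onesRow n)
        = (∑ x, w x) • (replicateCol Unit u * onesRow n) := by
      rw [Matrix.mul_assoc, ← Matrix.mul_assoc (onesRow n), rowOne_mul_col,
        Matrix.smul_mul, Matrix.one_mul, Matrix.mul_smul]
    rw [e1, e2, e3, e4]
    simp only [replicateCol_add, replicateCol_smul, Matrix.add_mul, Matrix.smul_mul, add_smul]
    abel

lemma goodM_inv {c : ℂ} (hc : c ≠ 0) {a : ZMod n} {M : Matrix (ZMod n) (ZMod n) ℂ}
    (hM : GoodM c a M) : GoodM c⁻¹ (-a) M⁻¹ := by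
  obtain ⟨u, hu, rfl⟩ := hM
  refine ⟨fun y => -c⁻¹ * u (y - a), ?_, ?_⟩
  · have : (∑ y, -c⁻¹ * u (y - a)) = -c⁻¹ * ∑ y, u (y + -a) := by
      rw [Finset.mul_sum]
      exact Finset.sum_congr rfl (fun y _ => by rw [sub_eq_add_neg])
    rw [this, sum_shift, hu]
    field_simp
    ring
  · apply Matrix.inv_eq_right_inv
    have e1 : c • shiftM n a * (c⁻¹ • shiftM n (-a)) = 1 := by
      rw [Matrix.smul_mul, Matrix.mul_smul, shiftM_mul, smul_smul, mul_inv_cancel₀ hc,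
        add_neg_cancel, shiftM_zero, one_smul]
    have e2 : c • shiftM n a * (replicateCol Unit (fun y => -c⁻¹ * u (y - a)) * onesRow n)
        = replicateCol Unit (fun x => c * (-c⁻¹ * u x)) * onesRow n := by
      rw [← Matrix.mul_assoc, Matrix.smul_mul, shiftM_mul_col]
      congr 2
      ext x
      simp [add_sub_cancel_right]
    have e3 : replicateCol Unit u * onesRow n * (c⁻¹ • shiftM n (-a))
        = c⁻¹ • (replicateCol Unit u * onesRow n) := by
      rw [Matrix.mul_smul, Matrix.mul_assoc, rowOne_mul_shiftM]
    have e4 : replicateCol Unit u * onesRow n * (replicateCol Unit (fun y => -c⁻¹ * u (y - a)) * onesRow n)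
        = (∑ y, -c⁻¹ * u (y - a)) • (replicateCol Unit u * onesRow n) := by
      rw [Matrix.mul_assoc, ← Matrix.mul_assoc (onesRow n), rowOne_mul_col,
        Matrix.smul_mul, Matrix.one_mul, Matrix.mul_smul]
    rw [mul_add, add_mul, add_mul, e1, e2, e3, e4]
    have hsum : (∑ y, -c⁻¹ * u (y - a)) = -c⁻¹ * (1 - c) := by
      have : (∑ y, -c⁻¹ * u (y - a)) = -c⁻¹ * ∑ y, u (y + -a) := by
        rw [Finset.mul_sum]
        exact Finset.sum_congr rfl (fun y _ => by rw [sub_eq_add_neg])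
      rw [this, sum_shift, hu]
    rw [hsum]
    have : replicateCol Unit (fun x => c * (-c⁻¹ * u x)) = (-1 : ℂ) • replicateCol Unit u := by
      rw [← replicateCol_smul]
      congr 1
      ext x
      field_simp
      simp
    rw [this, Matrix.smul_mul]
    match_scalars <;> field_simp <;> ring

end shift

section pows
variable [NeZero n] {q : ℂ} {C : Matrix (ZMod n) (ZMod n) ℂ}

lemma goodM_pow (hC : GoodM q (-1) C) (k : ℕ) :
    GoodM (q ^ k) (-(k : ZMod n)) (C ^ k) := by
  induction k with
  | zero => simpa using goodM_one
  | succ k ih =>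
    have h2 := goodM_mul ih hC
    have hc : q ^ k * q = q ^ (k + 1) := (pow_succ q k).symm
    have ha : (-(k : ZMod n)) + -1 = -((k + 1 : ℕ) : ZMod n) := by push_cast; ring
    have hm : C ^ k * C = C ^ (k + 1) := (pow_succ C k).symm
    rwa [hc, ha, hm] at h2

lemma goodM_zpow (hq : q ≠ 0) (hC : GoodM q (-1) C) (m : ℤ) :
    GoodM (q ^ m) (-((m : ℤ) : ZMod n)) (C ^ m) := by
  cases m with
  | ofNat k =>
    have := goodM_pow hC k
    have h1 : q ^ (Int.ofNat k) = q ^ k := zpow_natCast q k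
    have h2 : C ^ (Int.ofNat k) = C ^ k := zpow_natCast C k
    have h3 : -(((Int.ofNat k : ℤ)) : ZMod n) = -(k : ZMod n) := by simp
    rwa [h1, h2, h3]
  | negSucc k =>
    have := goodM_inv (pow_ne_zero (k+1) hq) (goodM_pow hC (k+1))
    have h1 : q ^ (Int.negSucc k) = (q ^ (k+1))⁻¹ := zpow_negSucc q k
    have h2 : C ^ (Int.negSucc k) = (C ^ (k+1))⁻¹ := zpow_negSucc C k
    have h3 : -(((Int.negSucc k : ℤ)) : ZMod n) = - -(((k+1 : ℕ)) : ZMod n) := by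
      push_cast; ring
    rwa [h1, h2, h3]

end pows

/-- `ZMod n ≃ Fin n`. -/
def zmodFinEquiv [NeZero n] : ZMod n ≃ Fin n where
  toFun x := ⟨x.val, ZMod.val_lt x⟩
  invFun i := ((i : ℕ) : ZMod n)
  left_inv x := ZMod.natCast_rightInverse x
  right_inv i := by
    ext
    exact ZMod.val_cast_of_lt i.isLt

section detshift
variable [NeZero n]

lemma det_one_sub_shift_one (hn : 2 ≤ n) (t : ℂ) :
    (1 - t • shiftM n 1).det = 1 - t ^ n := by
  classical
  have e : Fin n ≃ ZMod n := (zmodFinEquiv (n := n)).symm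
  rw [← det_submatrix_equiv_self (zmodFinEquiv (n := n)).symm (1 - t • shiftM n 1)]
  set A := (1 - t • shiftM n 1).submatrix (zmodFinEquiv (n := n)).symm
      (zmodFinEquiv (n := n)).symm with hAdef
  set U : Matrix (Fin n) (Fin n) ℂ :=
    Matrix.of (fun i j => if (i:ℕ) ≤ (j:ℕ) then t ^ ((j:ℕ) - (i:ℕ)) else 0) with hUdef
  have hU : U.BlockTriangular id := by
    intro i j hij
    simp only [hUdef, Matrix.of_apply, U]
    rw [if_neg]
    exact fun h => absurd h (by simpa [id] using Nat.not_le.2 hij)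
  have hdetU : U.det = 1 := by
    rw [det_of_upperTriangular hU]
    apply Finset.prod_eq_one
    intro i _
    simp [hUdef]
  -- entry formula for A
  have hA : ∀ i l : Fin n, A i l
      = (if i = l then 1 else 0) - t * (if (l:ℕ) = ((i:ℕ)+1) % n then 1 else 0) := by
    intro i l
    have hsymm : ∀ j : Fin n, (zmodFinEquiv (n := n)).symm j = ((j : ℕ) : ZMod n) :=
      fun j => rfl
    have hiff2 : ((((l:ℕ)) : ZMod n) = (((i:ℕ)) : ZMod n) + 1) ↔ ((l:ℕ) = ((i:ℕ)+1) % n) := by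
      have h1 : (((i:ℕ)) : ZMod n) + 1 = (((i:ℕ) + 1 : ℕ) : ZMod n) := by push_cast; ring
      rw [h1, ZMod.natCast_eq_natCast_iff', Nat.mod_eq_of_lt l.isLt]
    have hiff1 : ((((i:ℕ)) : ZMod n) = (((l:ℕ)) : ZMod n)) ↔ (i = l) := by
      rw [ZMod.natCast_eq_natCast_iff', Nat.mod_eq_of_lt i.isLt, Nat.mod_eq_of_lt l.isLt,
        Fin.ext_iff]
    simp only [hAdef, Matrix.submatrix_apply, Matrix.sub_apply, Matrix.smul_apply,
      Matrix.one_apply, smul_eq_mul, hsymm, shiftM, hiff2, hiff1]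
  have hAU : A * U = 1 + replicateCol Unit (fun i : Fin n => if (i:ℕ) = n - 1 then (1:ℂ) else 0)
      * replicateRow Unit (fun j : Fin n => -t ^ ((j:ℕ)+1)) := by
    ext i j
    rw [Matrix.mul_apply]
    have hin : ((i:ℕ)+1) % n < n := Nat.mod_lt _ (by omega)
    set i1 : Fin n := ⟨((i:ℕ)+1) % n, hin⟩ with hi1
    have hterm : ∀ l, A i l * U l j
        = (if i = l then U l j else 0) - (if l = i1 then t * U l j else 0) := by
      intro l
      rw [hA i l]
      have hc : ((l:ℕ) = ((i:ℕ)+1) % n) ↔ l = i1 := by rw [Fin.ext_iff]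
      simp only [hc]
      split_ifs <;> ring
    rw [Finset.sum_congr rfl (fun l _ => hterm l), Finset.sum_sub_distrib,
      Finset.sum_ite_eq Finset.univ i, Finset.sum_ite_eq' Finset.univ i1]
    simp only [Finset.mem_univ, if_true]
    have hcr : (replicateCol Unit (fun i : Fin n => if (i:ℕ) = n - 1 then (1:ℂ) else 0)
        * replicateRow Unit (fun j : Fin n => -t ^ ((j:ℕ)+1))) i j
        = (if (i:ℕ) = n - 1 then (1:ℂ) else 0) * (-t ^ ((j:ℕ)+1)) := by
      rw [Matrix.mul_apply]
      simp
    rw [Matrix.add_apply, hcr]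
    have hUij : U i j = if (i:ℕ) ≤ (j:ℕ) then t ^ ((j:ℕ) - (i:ℕ)) else 0 := rfl
    have hUi1j : U i1 j = if (i1:ℕ) ≤ (j:ℕ) then t ^ ((j:ℕ) - (i1:ℕ)) else 0 := rfl
    have hone : (1 : Matrix (Fin n) (Fin n) ℂ) i j = if i = j then 1 else 0 :=
      Matrix.one_apply
    rw [hUij, hUi1j, hone]
    rcases Nat.lt_or_ge (i:ℕ) (n-1) with hilt | hige
    · -- i < n-1
      have hi1v : (i1 : ℕ) = (i:ℕ) + 1 := Nat.mod_eq_of_lt (by omega)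
      rw [hi1v, if_neg (show ¬ (i:ℕ) = n - 1 by omega), zero_mul, add_zero]
      rcases Nat.lt_trichotomy (j:ℕ) (i:ℕ) with hj | hj | hj
      · rw [if_neg (show ¬ (i:ℕ) ≤ (j:ℕ) by omega),
          if_neg (show ¬ (i:ℕ) + 1 ≤ (j:ℕ) by omega),
          if_neg (show ¬ i = j from fun hh => by rw [Fin.ext_iff] at hh; omega)]
        ring
      · rw [if_pos (show (i:ℕ) ≤ (j:ℕ) by omega),
          if_neg (show ¬ (i:ℕ) + 1 ≤ (j:ℕ) by omega),
          if_pos (show i = j from Fin.ext hj.symm)]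
        rw [show (j:ℕ) - (i:ℕ) = 0 by omega, pow_zero]
        ring
      · rw [if_pos (show (i:ℕ) ≤ (j:ℕ) by omega),
          if_pos (show (i:ℕ) + 1 ≤ (j:ℕ) by omega),
          if_neg (show ¬ i = j from fun hh => by rw [Fin.ext_iff] at hh; omega)]
        rw [show (j:ℕ) - (i:ℕ) = ((j:ℕ) - ((i:ℕ)+1)) + 1 by omega, pow_succ]
        ring
    · -- i = n-1
      have hieq : (i:ℕ) = n - 1 := by have := i.isLt; omega
      have hi1v : (i1 : ℕ) = 0 := by
        show ((i:ℕ)+1) % n = 0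
        rw [show (i:ℕ) + 1 = n by omega, Nat.mod_self]
      rw [hi1v, if_pos hieq, one_mul]
      rcases Nat.lt_or_ge (j:ℕ) (n-1) with hjlt | hjge
      · rw [if_neg (show ¬ (i:ℕ) ≤ (j:ℕ) by omega),
          if_pos (show 0 ≤ (j:ℕ) by omega),
          if_neg (show ¬ i = j from fun hh => by rw [Fin.ext_iff] at hh; omega)]
        rw [show (j:ℕ) - 0 = (j:ℕ) by omega, pow_succ]
        ring
      · have hjeq : (j:ℕ) = n - 1 := by have := j.isLt; omega
        rw [if_pos (show (i:ℕ) ≤ (j:ℕ) by omega),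
          if_pos (show 0 ≤ (j:ℕ) by omega),
          if_pos (show i = j from Fin.ext (by omega))]
        rw [show (j:ℕ) - (i:ℕ) = 0 by omega, pow_zero,
          show (j:ℕ) - 0 = n - 1 by omega, show (j:ℕ) + 1 = n by omega]
        rw [show t * t ^ (n-1) = t ^ n by rw [← pow_succ']; congr 1; omega]
        ring
  have hdet : A.det * U.det = 1 - t ^ n := by
    rw [← det_mul, hAU, det_one_add_replicateCol_mul_replicateRow]
    have : (fun j : Fin n => -t ^ ((j:ℕ)+1)) ⬝ᵥ (fun i : Fin n => if (i:ℕ) = n - 1 then (1:ℂ) else 0)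
        = -t ^ n := by
      rw [dotProduct]
      have hn1 : n - 1 < n := by omega
      have : ∀ l : Fin n, (-t ^ ((l:ℕ)+1)) * (if (l:ℕ) = n - 1 then (1:ℂ) else 0)
          = if l = (⟨n-1, hn1⟩ : Fin n) then -t ^ ((l:ℕ)+1) else 0 := by
        intro l
        have hc : (l = (⟨n-1, hn1⟩ : Fin n)) ↔ ((l:ℕ) = n - 1) := by simp [Fin.ext_iff]
        simp only [hc]
        split_ifs <;> ring
      rw [Finset.sum_congr rfl (fun l _ => this l), Finset.sum_ite_eq' Finset.univ]
      simp only [Finset.mem_univ, if_true]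
      show -t ^ ((n - 1) + 1) = -t ^ n
      rw [show n - 1 + 1 = n by omega]
    rw [this]
    ring
  rw [hdetU, mul_one] at hdet
  exact hdet

lemma det_one_sub_shift (hn : 2 ≤ n) (t : ℂ) (a : ZMod n) (ha : IsUnit a) :
    (1 - t • shiftM n a).det = 1 - t ^ n := by
  obtain ⟨ua, rfl⟩ := ha
  let ψ : ZMod n ≃ ZMod n :=
    ⟨fun x => ua * x, fun x => ua⁻¹ * x,
     fun x => by simp [← mul_assoc],
     fun x => by simp [← mul_assoc]⟩
  have hsub : (1 - t • shiftM n ua).submatrix ψ ψ = 1 - t • shiftM n 1 := by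
    ext x y
    have h1 : ψ x = ua * x := rfl
    have h2 : ψ y = ua * y := rfl
    have hcond1 : ((ua : ZMod n) * x = (ua : ZMod n) * y) ↔ (x = y) := by
      constructor
      · intro h
        have := congrArg (fun z => (ua⁻¹ : ZMod n) * z) h
        simpa [← mul_assoc] using this
      · rintro rfl; rfl
    have hcond : ((ua : ZMod n) * y = ua * x + ua) ↔ (y = x + 1) := by
      constructor
      · intro h
        have := congrArg (fun z => (ua⁻¹ : ZMod n) * z) h
        simpa [mul_add, ← mul_assoc] using this
      · rintro rfl
        ring
    simp only [Matrix.submatrix_apply, Matrix.sub_apply, Matrix.smul_apply, Matrix.one_apply,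
      smul_eq_mul, shiftM, h1, h2]
    congr 1
    · congr 1
      simp only [eq_iff_iff]
      exact hcond1
    · congr 1
      congr 1
      simp only [eq_iff_iff]
      exact hcond
  rw [← det_submatrix_equiv_self ψ, hsub, det_one_sub_shift_one hn]

/-- Key identity at generic `s`. -/
lemma key_det {c : ℂ} {a : ZMod n} {M : Matrix (ZMod n) (ZMod n) ℂ}
    (hn : 2 ≤ n) (hM : GoodM c a M) (ha : IsUnit a) (s : ℂ)
    (hgen : (c * s) ^ n ≠ 1) :
    (1 - c * s) * ((1 : Matrix (ZMod n) (ZMod n) ℂ) - s • M).det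
      = (1 - s) * (1 - (c * s) ^ n) := by
  obtain ⟨u, hu, rfl⟩ := hM
  have ht1 : (1 : ℂ) - c * s ≠ 0 := by
    intro h
    rw [sub_eq_zero] at h
    exact hgen (by rw [← h, one_pow])
  set A : Matrix (ZMod n) (ZMod n) ℂ := 1 - (c * s) • shiftM n a with hAdef
  set r1 : Matrix Unit (ZMod n) ℂ := replicateRow Unit (fun _ => (1:ℂ)) with hr1
  have hr1ones : r1 = onesRow n := rfl
  have hdetA : A.det = 1 - (c * s) ^ n := det_one_sub_shift hn (c * s) a ha
  have hAunit : IsUnit A.det := by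
    rw [hdetA, isUnit_iff_ne_zero]
    exact sub_ne_zero.2 (Ne.symm hgen)
  have hsplit : (1 : Matrix (ZMod n) (ZMod n) ℂ) - s • (c • shiftM n a + replicateCol Unit u * onesRow n)
      = A + replicateCol Unit (-s • u) * r1 := by
    rw [hAdef, hr1ones, replicateCol_smul, Matrix.smul_mul, smul_add, smul_smul, mul_comm s c]
    match_scalars <;> ring
  rw [hsplit, det_add_replicateCol_mul_replicateRow hAunit]
  have hrowA : r1 * A = (1 - c * s) • r1 := by
    rw [hAdef, Matrix.mul_sub, Matrix.mul_one, Matrix.mul_smul, hr1ones,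
      rowOne_mul_shiftM, sub_smul, one_smul]
  have hrowAinv : r1 * A⁻¹ = (1 - c * s)⁻¹ • r1 := by
    have h1 : r1 = (1 - c * s)⁻¹ • (r1 * A) := by
      rw [hrowA, smul_smul, inv_mul_cancel₀ ht1, one_smul]
    calc r1 * A⁻¹
        = ((1 - c * s)⁻¹ • (r1 * A)) * A⁻¹ := by rw [← h1]
      _ = (1 - c * s)⁻¹ • (r1 * (A * A⁻¹)) := by
          rw [Matrix.smul_mul, Matrix.mul_assoc]
      _ = (1 - c * s)⁻¹ • r1 := by
          rw [Matrix.mul_nonsing_inv A hAunit, Matrix.mul_one]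
  have hsmall : (1 + r1 * A⁻¹ * replicateCol Unit (-s • u)).det
      = 1 + (1 - c * s)⁻¹ * (-s * (1 - c)) := by
    rw [hrowAinv, Matrix.smul_mul, hr1ones, rowOne_mul_col]
    have hsum2 : (∑ x, (-s • u) x) = -s * (1 - c) := by
      simp only [Pi.smul_apply, smul_eq_mul, ← Finset.mul_sum, hu]
    rw [hsum2, det_unique]
    simp [Matrix.one_apply, smul_smul]
  rw [hsmall, hdetA]
  field_simp
  ring

section Glue
variable [NeZero n]

lemma submatrix_inv_eq (M : Matrix (Fin n) (Fin n) ℂ) :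
    (M⁻¹).submatrix (zmodFinEquiv (n := n)) (zmodFinEquiv (n := n))
      = (M.submatrix (zmodFinEquiv (n := n)) (zmodFinEquiv (n := n)))⁻¹ := by
  rw [Matrix.inv_def, Matrix.inv_def, det_submatrix_equiv_self,
    adjugate_submatrix_equiv_self]
  ext x y
  simp

lemma submatrix_pow_eq (M : Matrix (Fin n) (Fin n) ℂ) (k : ℕ) :
    (M ^ k).submatrix (zmodFinEquiv (n := n)) (zmodFinEquiv (n := n))
      = (M.submatrix (zmodFinEquiv (n := n)) (zmodFinEquiv (n := n))) ^ k := by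
  induction k with
  | zero => simp [pow_zero, submatrix_one_equiv]
  | succ k ih =>
    rw [pow_succ, pow_succ, ← ih, submatrix_mul_equiv]

lemma submatrix_zpow_eq (M : Matrix (Fin n) (Fin n) ℂ) (m : ℤ) :
    (M ^ m).submatrix (zmodFinEquiv (n := n)) (zmodFinEquiv (n := n))
      = (M.submatrix (zmodFinEquiv (n := n)) (zmodFinEquiv (n := n))) ^ m := by
  cases m with
  | ofNat k =>
    rw [Int.ofNat_eq_coe, zpow_natCast, zpow_natCast, submatrix_pow_eq]
  | negSucc k =>
    rw [zpow_negSucc, zpow_negSucc, ← submatrix_pow_eq, submatrix_inv_eq]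

lemma goodM_burau (hn : 2 ≤ n) (q : ℂ) :
    GoodM q (-1) ((burauProd n q).submatrix (zmodFinEquiv (n := n)) (zmodFinEquiv (n := n))) := by
  haveI : Fact (1 < n) := ⟨by omega⟩
  refine ⟨fun x => if x = 0 then 1 - q else 0, ?_, ?_⟩
  · rw [Finset.sum_ite_eq' Finset.univ (0 : ZMod n)]
    simp
  · rw [burauProd_eq_ppMat]
    ext x y
    have hex : ∀ z : ZMod n, ((zmodFinEquiv (n := n)) z : ℕ) = z.val := fun z => rfl
    have hxval : x.val < n := ZMod.val_lt x
    have hyval : y.val < n := ZMod.val_lt y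
    have hval_iff : ∀ a b : ZMod n, a = b ↔ a.val = b.val :=
      fun a b => ⟨fun h => by rw [h], fun h => ZMod.val_injective n h⟩
    have hshift_cond : (y = x + -1) ↔ (x.val = (y.val + 1) % n) := by
      rw [show x + (-1 : ZMod n) = x - 1 by ring, eq_sub_iff_add_eq, eq_comm, hval_iff,
        ZMod.val_add, ZMod.val_one]
    have hx0 : (x = 0) ↔ (x.val = 0) := by
      rw [hval_iff]
      simp [ZMod.val_zero]
    have hrhs : ((q • shiftM n (-1)
        + replicateCol Unit (fun x : ZMod n => if x = 0 then 1 - q else 0) * onesRow n :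
          Matrix (ZMod n) (ZMod n) ℂ)) x y
        = q * (if y = x + -1 then 1 else 0) + (if x = 0 then 1 - q else 0) := by
      have : ((replicateCol Unit (fun x : ZMod n => if x = 0 then 1 - q else 0) * onesRow n :
          Matrix (ZMod n) (ZMod n) ℂ)) x y
          = (if x = 0 then 1 - q else 0) := by
        rw [Matrix.mul_apply]
        simp [onesRow]
      rw [Matrix.add_apply, Matrix.smul_apply, this, smul_eq_mul, shiftM]
    rw [Matrix.submatrix_apply, hrhs]
    have hmod : (y.val + 1) % n = if y.val = n - 1 then 0 else y.val + 1 := by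
      split_ifs with h
      · rw [show y.val + 1 = n by omega, Nat.mod_self]
      · exact Nat.mod_eq_of_lt (by omega)
    have hfin_eq : ((zmodFinEquiv (n := n)) x = (zmodFinEquiv (n := n)) y) ↔ x.val = y.val := by
      rw [Fin.ext_iff]
      exact Iff.rfl
    simp only [ppMat, hex, hshift_cond, hx0, hmod, hfin_eq, Matrix.one_apply]
    split_ifs <;> try ring
    all_goals exfalso
    all_goals omega

end Glue

lemma isUnit_neg_int_cast {n : ℕ} [NeZero n] (m : ℤ) (hnm : Nat.Coprime n m.natAbs) :
    IsUnit (-((m : ℤ) : ZMod n)) := by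
  have h1 : IsUnit ((m.natAbs : ZMod n)) :=
    (ZMod.isUnit_iff_coprime m.natAbs n).2 hnm.symm
  have h2 : IsUnit (((m : ℤ)) : ZMod n) := by
    rcases Int.natAbs_eq m with h | h
    · rw [h, Int.cast_natCast]
      exact h1
    · rw [h, Int.cast_neg, Int.cast_natCast]
      exact h1.neg
  exact h2.neg

/-- generic-`s` version of the main theorem -/
theorem torus_braid_zeta_generic (n : ℕ) (hn : 2 ≤ n) (m : ℤ)
    (hnm : Nat.Coprime n m.natAbs) (q : ℂ) (hq : q ≠ 0) (s : ℂ)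
    (hgen : (q ^ m * s) ^ n ≠ 1) :
    (1 - q ^ m * s) * ((1 : Matrix (Fin n) (Fin n) ℂ) - s • torusBurau n q m).det
      = (1 - s) * (1 - q ^ ((n : ℤ) * m) * s ^ n) := by
  haveI : NeZero n := ⟨by omega⟩
  set C := burauProd n q with hC
  set Cz := C.submatrix (zmodFinEquiv (n := n)) (zmodFinEquiv (n := n)) with hCz
  have hdet_eq : ((1 : Matrix (Fin n) (Fin n) ℂ) - s • (C ^ m)).det
      = ((1 : Matrix (ZMod n) (ZMod n) ℂ) - s • (Cz ^ m)).det := by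
    rw [← det_submatrix_equiv_self (zmodFinEquiv (n := n)) (1 - s • (C ^ m))]
    congr 1
    have hz := submatrix_zpow_eq C m
    ext x y
    simp only [Matrix.sub_apply, Matrix.smul_apply, Matrix.submatrix_apply]
    rw [show (C ^ m) ((zmodFinEquiv (n := n)) x) ((zmodFinEquiv (n := n)) y) = (Cz ^ m) x y by
      rw [← hz]; rfl]
    congr 1
    simp [Matrix.one_apply, EmbeddingLike.apply_eq_iff_eq]
  have hGood : GoodM (q ^ m) (-((m : ℤ) : ZMod n)) (Cz ^ m) :=
    goodM_zpow hq (goodM_burau hn q) m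
  have hunit : IsUnit (-((m : ℤ) : ZMod n)) := isUnit_neg_int_cast m hnm
  have hkey := key_det hn hGood hunit s hgen
  have hpow : (q ^ m * s) ^ n = q ^ ((n : ℤ) * m) * s ^ n := by
    rw [mul_pow, mul_comm ((n : ℤ)) m, _root_.zpow_mul, zpow_natCast]
  rw [torusBurau, ← hC, hdet_eq, hkey, hpow]

/-- **Braid zeta function of the torus type braid.** For `gcd(n, |m|) = 1`,
`(1 − q^m s)·det(I_n − s·T_{n,m}) = (1 − s)(1 − q^{nm} s^n)`, i.e.
`ζ(s, σ_{n,m}; β_{n,q}) = (1 − q^m s)/((1 − s)(1 − q^{nm} s^n))`. -/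
theorem torus_braid_zeta (n : ℕ) (hn : 2 ≤ n) (m : ℤ) (hnm : Nat.Coprime n m.natAbs)
    (q : ℂ) (hq : q ≠ 0) (s : ℂ) :
    (1 - q ^ m * s) * ((1 : Matrix (Fin n) (Fin n) ℂ) - s • torusBurau n q m).det
      = (1 - s) * (1 - q ^ ((n : ℤ) * m) * s ^ n) := by
  have hcont_f : Continuous (fun z : ℂ =>
      (1 - q ^ m * z) * ((1 : Matrix (Fin n) (Fin n) ℂ) - z • torusBurau n q m).det) := by
    apply Continuous.mul
    · exact continuous_const.sub (continuous_const.mul continuous_id)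
    · exact (continuous_const.sub (continuous_id.smul continuous_const)).matrix_det
  have hcont_g : Continuous (fun z : ℂ => (1 - z) * (1 - q ^ ((n : ℤ) * m) * z ^ n)) := by
    apply Continuous.mul
    · exact continuous_const.sub continuous_id
    · exact continuous_const.sub (continuous_const.mul (continuous_pow n))
  set p : Polynomial ℂ := (Polynomial.C (q ^ m) * Polynomial.X) ^ n - 1 with hp
  have hp0 : p ≠ 0 := by
    intro h
    have := congrArg (Polynomial.eval 0) h
    simp only [hp, Polynomial.eval_sub, Polynomial.eval_pow, Polynomial.eval_mul,
      Polynomial.eval_C, Polynomial.eval_X, Polynomial.eval_one, Polynomial.eval_zero,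
      mul_zero, zero_pow (show n ≠ 0 by omega), zero_sub] at this
    exact one_ne_zero (neg_eq_zero.1 this)
  have hroots : {z : ℂ | (q ^ m * z) ^ n = 1}.Finite := by
    apply Set.Finite.subset (Polynomial.finite_setOf_isRoot hp0)
    intro z hz
    simp only [Set.mem_setOf_eq] at hz ⊢
    simp [Polynomial.IsRoot, hp, sub_eq_zero, hz]
  have hdense : Dense {z : ℂ | (q ^ m * z) ^ n = 1}ᶜ := hroots.countable.dense_compl ℂ
  have heq := Continuous.ext_on hdense hcont_f hcont_g
    (fun z hz => torus_braid_zeta_generic n hn m hnm q hq z hz)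
  exact congrFun heq s
end detshift
end

section
/- Let n ≥ 2 and m ∈ ℤ with gcd(n, |m|) = 1. Then for every q ∈ ℂ with q ≠ 0, the trace of the torus type braid matrix satisfies tr(T_{n,m}) = 1 − q^m. -/
open Matrix

open Polynomial
section Aux

/-- explicit form of the product of all Burau matrices -/
noncomputable def Cmat {R : Type*} [CommRing R] (n : ℕ) (q : R) : Matrix (Fin n) (Fin n) R :=
  Matrix.of fun j k =>
    if (j : ℕ) = 0 then (if (k : ℕ) = n - 1 then 1 else 1 - q)
    else if (k : ℕ) + 1 = (j : ℕ) then q else 0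

/-- partial products -/
noncomputable def Qmat (n : ℕ) (q : ℂ) (r : ℕ) : Matrix (Fin n) (Fin n) ℂ :=
  Matrix.of fun j k =>
    if (j : ℕ) = 0 then (if (k : ℕ) < r then 1 - q else if (k : ℕ) = r then 1 else 0)
    else if (j : ℕ) ≤ r then (if (k : ℕ) + 1 = (j : ℕ) then q else 0)
    else if j = k then 1 else 0

lemma Qmat_zero (n : ℕ) (q : ℂ) : Qmat n q 0 = 1 := by
  ext j k
  simp only [Qmat, Matrix.of_apply, Matrix.one_apply, Fin.ext_iff]
  split_ifs <;> first | rfl | omega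

lemma Qmat_last (n : ℕ) (hn : 1 ≤ n) (q : ℂ) : Qmat n q (n - 1) = Cmat n q := by
  ext j k
  have hk := k.isLt
  have hj := j.isLt
  simp only [Qmat, Cmat, Matrix.of_apply]
  by_cases hj0 : (j : ℕ) = 0
  · simp only [hj0, if_true]
    split_ifs <;> first | rfl | omega
  · simp only [hj0, if_false]
    have : (j : ℕ) ≤ n - 1 := by omega
    simp [this]

lemma Qmat_step (n : ℕ) (q : ℂ) (r : ℕ) (hr : r < n - 1) :
    Qmat n q r * burauMatrix n q ⟨r, hr⟩ = Qmat n q (r + 1) := by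
  have hrn : r + 1 < n := by omega
  have hrn0 : r < n := by omega
  have hi : ((⟨r, hr⟩ : Fin (n - 1)) : ℕ) = r := rfl
  have Brow_ne : ∀ l k : Fin n, (l : ℕ) ≠ r → (l : ℕ) ≠ r + 1 →
      burauMatrix n q ⟨r, hr⟩ l k = if l = k then 1 else 0 := by
    intro l k h1 h2
    simp only [burauMatrix, hi, Fin.ext_iff, true_and]
    split_ifs <;> first | rfl | omega
  have Brow_r : ∀ k : Fin n, burauMatrix n q ⟨r, hr⟩ ⟨r, hrn0⟩ k =
      if (k : ℕ) = r then 1 - q else if (k : ℕ) = r + 1 then 1 else 0 := by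
    intro k
    simp only [burauMatrix, hi, Fin.val_mk, Fin.ext_iff, true_and]
    split_ifs <;> first | rfl | omega
  have Brow_r1 : ∀ k : Fin n, burauMatrix n q ⟨r, hr⟩ ⟨r + 1, hrn⟩ k =
      if (k : ℕ) = r then q else 0 := by
    intro k
    simp only [burauMatrix, hi, Fin.val_mk, Fin.ext_iff, true_and]
    split_ifs <;> first | rfl | omega
  ext j k
  rw [Matrix.mul_apply]
  by_cases hj0 : (j : ℕ) = 0
  · -- row 0
    have hQ : ∀ l : Fin n, Qmat n q r j l =
        if (l : ℕ) < r then 1 - q else if (l : ℕ) = r then 1 else 0 := by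
      intro l; simp [Qmat, hj0]
    have hQ' : Qmat n q (r + 1) j k =
        if (k : ℕ) < r + 1 then 1 - q else if (k : ℕ) = r + 1 then 1 else 0 := by
      simp [Qmat, hj0]
    rw [hQ']
    by_cases hk1 : (k : ℕ) < r
    · rw [Finset.sum_eq_single_of_mem k (Finset.mem_univ _)]
      · rw [hQ, Brow_ne k k (by omega) (by omega)]
        rw [if_pos hk1, if_pos rfl, mul_one, if_pos (by omega)]
      · intro l _ hl
        rw [hQ]
        have hlk : ¬ l = k := hl
        rcases lt_trichotomy (l : ℕ) r with h | h | h
        · rw [if_pos h, Brow_ne l k (by omega) (by omega), if_neg hlk, mul_zero]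
        · rw [if_neg (by omega), if_pos h]
          have hlr : l = (⟨r, hrn0⟩ : Fin n) := Fin.ext h
          rw [hlr, Brow_r, if_neg (by omega), if_neg (by omega), mul_zero]
        · rw [if_neg (by omega), if_neg (by omega), zero_mul]
    · -- k ≥ r : only l = ⟨r⟩ contributes
      rw [Finset.sum_eq_single_of_mem ⟨r, hrn0⟩ (Finset.mem_univ _)]
      · rw [hQ]
        rw [if_neg (by (try simp only [Fin.val_mk]); omega),
          if_pos (by (try simp only [Fin.val_mk]) : ((⟨r, hrn0⟩ : Fin n) : ℕ) = r),
          Brow_r, one_mul]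
        split_ifs <;> first | rfl | omega
      · intro l _ hl
        rw [hQ]
        have hlr : (l : ℕ) ≠ r := fun h => hl (Fin.ext h)
        by_cases h2 : (l : ℕ) < r
        · rw [if_pos h2, Brow_ne l k (by omega) (by omega),
            if_neg (fun h : l = k => hk1 (h ▸ h2)), mul_zero]
        · rw [if_neg h2, if_neg hlr, zero_mul]
  · -- rows j ≥ 1
    have hQ' : Qmat n q (r + 1) j k =
        if (j : ℕ) ≤ r + 1 then (if (k : ℕ) + 1 = (j : ℕ) then q else 0)
        else if j = k then 1 else 0 := by
      simp [Qmat, hj0]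
    rw [hQ']
    by_cases hjr : (j : ℕ) ≤ r
    · -- single support at l = j - 1 < r
      have hj1 : (j : ℕ) - 1 < n := by omega
      rw [Finset.sum_eq_single_of_mem ⟨(j : ℕ) - 1, hj1⟩ (Finset.mem_univ _)]
      · have hQv : Qmat n q r j ⟨(j : ℕ) - 1, hj1⟩ = q := by
          simp only [Qmat, Matrix.of_apply, hj0, if_false, if_pos hjr]
          rw [if_pos (by (try simp only [Fin.val_mk]); omega)]
        rw [hQv, Brow_ne _ k (by (try simp only [Fin.val_mk]); omega)
            (by (try simp only [Fin.val_mk]); omega)]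
        rw [if_pos (by omega : (j : ℕ) ≤ r + 1)]
        by_cases hk : (k : ℕ) + 1 = (j : ℕ)
        · rw [if_pos hk, if_pos (Fin.ext (by (try simp only [Fin.val_mk]); omega)), mul_one]
        · rw [if_neg hk, if_neg (fun h => hk (by
            have := congrArg Fin.val h
            simp only [Fin.val_mk] at this
            omega)), mul_zero]
      · intro l _ hl
        have : Qmat n q r j l = 0 := by
          simp only [Qmat, Matrix.of_apply, hj0, if_false, if_pos hjr]
          rw [if_neg (fun h => hl (Fin.ext (by (try simp only [Fin.val_mk]); omega)))]
        rw [this, zero_mul]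
    · -- j ≥ r+1 : Q row is identity
      have hQj : ∀ l : Fin n, Qmat n q r j l = if j = l then 1 else 0 := by
        intro l; simp [Qmat, hj0, hjr]
      rw [Finset.sum_eq_single_of_mem j (Finset.mem_univ _)]
      · rw [hQj, if_pos rfl, one_mul]
        by_cases hj2 : (j : ℕ) = r + 1
        · have hje : j = (⟨r + 1, hrn⟩ : Fin n) := Fin.ext hj2
          have hv : ((⟨r + 1, hrn⟩ : Fin n) : ℕ) = r + 1 := rfl
          rw [hje, Brow_r1, hv, if_pos (le_refl (r + 1))]
          split_ifs <;> first | rfl | omega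
        · have hne : ¬ (j : ℕ) ≤ r + 1 := by omega
          rw [Brow_ne j k (by omega) hj2, if_neg hne]
      · intro l _ hl
        rw [hQj, if_neg (Ne.symm hl), zero_mul]

lemma burauProd_eq (n : ℕ) (hn : 1 ≤ n) (q : ℂ) : burauProd n q = Cmat n q := by
  have key : ∀ r ≤ n - 1,
      (((List.finRange (n - 1)).take r).map (burauMatrix n q)).prod = Qmat n q r := by
    intro r hr
    induction r with
    | zero => simpa using (Qmat_zero n q).symm
    | succ r ih =>
      have hr' : r < n - 1 := by omega
      have h1 := ih (by omega)
      have htake : (List.finRange (n - 1)).take (r + 1) =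
          (List.finRange (n - 1)).take r ++ [⟨r, hr'⟩] := by
        rw [List.take_succ]
        congr 1
        rw [List.getElem?_eq_getElem (by simpa using hr')]
        simp [List.getElem_finRange]
      rw [htake, List.map_append, List.prod_append]
      simp only [List.map_cons, List.map_nil, List.prod_cons, List.prod_nil, mul_one]
      rw [h1, Qmat_step n q r hr']
  have := key (n - 1) le_rfl
  rwa [List.take_of_length_le (by simp), Qmat_last n hn q] at this

section Eigen

noncomputable def nodes (n : ℕ) (q ψ : ℂ) : Fin n → ℂ :=
  fun k => if (k : ℕ) = 0 then q else ψ ^ (k : ℕ)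

noncomputable def dvec (n : ℕ) (q ψ : ℂ) : Fin n → ℂ :=
  fun k => if (k : ℕ) = 0 then 1 else q * ψ ^ (n - (k : ℕ))

noncomputable def Vmat (n : ℕ) (q ψ : ℂ) : Matrix (Fin n) (Fin n) ℂ :=
  (Matrix.vandermonde (nodes n q ψ))ᵀ

lemma geom_sum_eq_zero_of_root {x : ℂ} {n : ℕ} (hx1 : x ≠ 1) (hxn : x ^ n = 1) :
    ∑ i ∈ Finset.range n, x ^ i = 0 := by
  have h := geom_sum_mul x n
  rw [hxn, sub_self] at h
  rcases mul_eq_zero.mp h with h' | h'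
  · exact h'
  · exact absurd (sub_eq_zero.mp h') hx1

lemma Cmat_mul_Vmat (n : ℕ) (hn : 2 ≤ n) (q ψ : ℂ) (hψ : IsPrimitiveRoot ψ n) :
    Cmat n q * Vmat n q ψ = Vmat n q ψ * Matrix.diagonal (dvec n q ψ) := by
  have hn0 : n ≠ 0 := by omega
  have hψn : ψ ^ n = 1 := hψ.pow_eq_one
  ext j k
  rw [Matrix.mul_apply, Matrix.mul_diagonal]
  have hV : ∀ l : Fin n, Vmat n q ψ l k = nodes n q ψ k ^ (l : ℕ) := fun l => rfl
  set x := nodes n q ψ k with hx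
  -- facts about x when k ≠ 0
  by_cases hj0 : (j : ℕ) = 0
  · -- row 0
    have hC : ∀ l : Fin n, Cmat n q j l =
        if (l : ℕ) = n - 1 then 1 else 1 - q := by
      intro l; simp [Cmat, hj0]
    have split : ∀ l : Fin n, Cmat n q j l * Vmat n q ψ l k =
        (1 - q) * x ^ (l : ℕ) + (if (l : ℕ) = n - 1 then q * x ^ (l : ℕ) else 0) := by
      intro l
      rw [hC, hV]
      split_ifs <;> ring
    rw [Finset.sum_congr rfl (fun l _ => split l), Finset.sum_add_distrib]
    rw [← Finset.mul_sum, Fin.sum_univ_eq_sum_range (fun i => x ^ i) n]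
    have hlast : (∑ l : Fin n, if (l : ℕ) = n - 1 then q * x ^ (l : ℕ) else 0)
        = q * x ^ (n - 1) := by
      rw [Finset.sum_eq_single_of_mem ⟨n - 1, by omega⟩ (Finset.mem_univ _)]
      · rw [if_pos rfl]
      · intro l _ hl
        rw [if_neg (fun h => hl (Fin.ext h))]
    rw [hlast]
    have hVjk : Vmat n q ψ j k = 1 := by
      rw [hV]; rw [hj0, pow_zero]
    rw [hVjk, one_mul]
    by_cases hk0 : (k : ℕ) = 0
    · have hxq : x = q := by rw [hx]; simp [nodes, hk0]
      have hd : dvec n q ψ k = 1 := by simp [dvec, hk0]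
      rw [hxq, hd]
      have hqq : q * q ^ (n - 1) = q ^ n := by
        rw [← pow_succ']
        congr 1
        omega
      rw [hqq]
      have hgs := geom_sum_mul q n
      linear_combination (-1 : ℂ) * hgs
    · -- k ≥ 1
      set K := (k : ℕ) with hK
      have hK1 : 1 ≤ K := by omega
      have hKn : K < n := k.isLt
      have hxv : x = ψ ^ K := by rw [hx]; simp only [nodes]; rw [if_neg hk0]
      have hx1 : x ≠ 1 := by
        rw [hxv]
        intro h
        rcases (hψ.pow_eq_one_iff_dvd K).mp h with ⟨c, hc⟩
        rcases Nat.eq_zero_or_pos c with rfl | hc0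
        · omega
        · nlinarith [hc, hc0, hKn, hK1]
      have hxn : x ^ n = 1 := by
        rw [hxv, ← pow_mul, mul_comm K n, pow_mul, hψn, one_pow]
      rw [geom_sum_eq_zero_of_root hx1 hxn, mul_zero, zero_add]
      have hd : dvec n q ψ k = q * ψ ^ (n - K) := by simp only [dvec]; rw [if_neg hk0]
      rw [hd, hxv, ← pow_mul]
      have he : K * (n - 1) = (K - 1) * n + (n - K) := by
        zify [hK1, le_of_lt hKn, show (1:ℕ) ≤ n by omega]
        ring
      rw [he, pow_add, pow_mul', hψn, one_pow, one_mul]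
  · -- rows j ≥ 1
    have hC : ∀ l : Fin n, Cmat n q j l =
        if (l : ℕ) + 1 = (j : ℕ) then q else 0 := by
      intro l; simp [Cmat, hj0]
    have hj1 : (j : ℕ) - 1 < n := by have := j.isLt; omega
    rw [Finset.sum_eq_single_of_mem ⟨(j : ℕ) - 1, hj1⟩ (Finset.mem_univ _)]
    · rw [hC, hV, hV j, if_pos (by simp only [Fin.val_mk]; omega)]
      simp only [Fin.val_mk]
      by_cases hk0 : (k : ℕ) = 0
      · have hxq : x = q := by rw [hx]; simp [nodes, hk0]
        have hd : dvec n q ψ k = 1 := by simp [dvec, hk0]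
        rw [hxq, hd, mul_one, ← pow_succ']
        congr 1
        omega
      · set K := (k : ℕ) with hK
        have hK1 : 1 ≤ K := by omega
        have hKn : K < n := k.isLt
        have hxv : x = ψ ^ K := by rw [hx]; simp only [nodes]; rw [if_neg hk0]
        have hd : dvec n q ψ k = q * ψ ^ (n - K) := by simp only [dvec]; rw [if_neg hk0]
        rw [hd, hxv, ← pow_mul, ← pow_mul]
        have he : K * (j : ℕ) + (n - K) = K * ((j : ℕ) - 1) + n := by
          zify [hK1, le_of_lt hKn, show (1:ℕ) ≤ (j : ℕ) by omega]
          ring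
        calc q * ψ ^ (K * ((j : ℕ) - 1)) = ψ ^ (K * ((j : ℕ) - 1)) * ψ ^ n * q := by
              rw [hψn]; ring
          _ = ψ ^ (K * ((j : ℕ) - 1) + n) * q := by rw [pow_add]
          _ = ψ ^ (K * (j : ℕ) + (n - K)) * q := by rw [he]
          _ = ψ ^ (K * (j : ℕ)) * (q * ψ ^ (n - K)) := by rw [pow_add]; ring
    · intro l _ hl
      rw [hC, if_neg (fun h => hl (Fin.ext (show (l : ℕ) = (j : ℕ) - 1 by omega))), zero_mul]

lemma Vmat_det_isUnit (n : ℕ) (q ψ : ℂ) (hψ : IsPrimitiveRoot ψ n)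
    (hq : q ^ n ≠ 1) : IsUnit (Vmat n q ψ).det := by
  rw [Vmat, Matrix.det_transpose, isUnit_iff_ne_zero, Ne,
    Matrix.det_vandermonde_eq_zero_iff]
  rintro ⟨i, j, hij, hne⟩
  have hψn : ψ ^ n = 1 := hψ.pow_eq_one
  apply hne
  unfold nodes at hij
  by_cases hi0 : (i : ℕ) = 0 <;> by_cases hj0 : (j : ℕ) = 0
  · exact Fin.ext (hi0.trans hj0.symm)
  · rw [if_pos hi0, if_neg hj0] at hij
    exfalso
    apply hq
    rw [hij, ← pow_mul, mul_comm, pow_mul, hψn, one_pow]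
  · rw [if_neg hi0, if_pos hj0] at hij
    exfalso
    apply hq
    rw [← hij, ← pow_mul, mul_comm, pow_mul, hψn, one_pow]
  · rw [if_neg hi0, if_neg hj0] at hij
    exact Fin.ext (hψ.pow_inj i.isLt j.isLt hij)

lemma conj_pow_trace {N : ℕ} (A V D : Matrix (Fin N) (Fin N) ℂ)
    (hV : IsUnit V.det) (h : A * V = V * D) (k : ℕ) :
    ((A ^ k).trace = (D ^ k).trace) ∧ (((A ^ k)⁻¹).trace = ((D ^ k)⁻¹).trace) := by
  have hpow : A ^ k * V = V * D ^ k := by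
    induction k with
    | zero => simp
    | succ k ih =>
      calc A ^ (k + 1) * V = A * (A ^ k * V) := by rw [pow_succ', Matrix.mul_assoc]
        _ = A * (V * D ^ k) := by rw [ih]
        _ = (A * V) * D ^ k := by rw [Matrix.mul_assoc]
        _ = V * D * D ^ k := by rw [h]
        _ = V * D ^ (k + 1) := by rw [Matrix.mul_assoc, ← pow_succ']
  have hA : A ^ k = V * D ^ k * V⁻¹ := by
    rw [← hpow, Matrix.mul_assoc, Matrix.mul_nonsing_inv _ hV, Matrix.mul_one]
  constructor
  · rw [hA, Matrix.trace_mul_cycle, Matrix.nonsing_inv_mul _ hV, Matrix.one_mul]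
  · rw [hA, Matrix.mul_inv_rev, Matrix.mul_inv_rev,
      Matrix.nonsing_inv_nonsing_inv _ hV, ← Matrix.mul_assoc,
      Matrix.trace_mul_cycle, Matrix.nonsing_inv_mul _ hV, Matrix.one_mul]

lemma sum_dvec_pow (n : ℕ) (hn : 2 ≤ n) (k : ℕ) (hk : ¬ n ∣ k) (q ψ : ℂ)
    (hψ : IsPrimitiveRoot ψ n) :
    ∑ j : Fin n, (dvec n q ψ j) ^ k = 1 - q ^ k := by
  obtain ⟨n', rfl⟩ : ∃ n', n = n' + 1 := ⟨n - 1, by omega⟩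
  have hψn : ψ ^ (n' + 1) = 1 := hψ.pow_eq_one
  set y := ψ ^ k with hy
  have hy1 : y ≠ 1 := fun h => hk ((hψ.pow_eq_one_iff_dvd k).mp h)
  have hyn : y ^ (n' + 1) = 1 := by
    rw [hy, ← pow_mul, mul_comm, pow_mul, hψn, one_pow]
  rw [Fin.sum_univ_succ]
  have h0 : dvec (n' + 1) q ψ 0 = 1 := by simp [dvec]
  have hsucc : ∀ i : Fin n', (dvec (n' + 1) q ψ i.succ) ^ k = q ^ k * y ^ (n' - (i : ℕ)) := by
    intro i
    have : dvec (n' + 1) q ψ i.succ = q * ψ ^ (n' - (i : ℕ)) := by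
      simp [dvec, Fin.val_succ, Nat.succ_sub_one]
    rw [this, mul_pow, ← pow_mul, mul_comm (n' - (i : ℕ)) k, pow_mul, ← hy]
  rw [h0, one_pow, Finset.sum_congr rfl (fun i _ => hsucc i), ← Finset.mul_sum]
  have hsum : ∑ i : Fin n', y ^ (n' - (i : ℕ)) = -1 := by
    rw [Fin.sum_univ_eq_sum_range (fun i => y ^ (n' - i)) n']
    have hrefl : ∑ i ∈ Finset.range n', y ^ (n' - i)
        = ∑ i ∈ Finset.range n', y ^ (i + 1) := by
      rw [← Finset.sum_range_reflect (fun j => y ^ (j + 1)) n']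
      apply Finset.sum_congr rfl
      intro i hi
      rw [Finset.mem_range] at hi
      congr 1
      omega
    rw [hrefl]
    have h2 := Finset.sum_range_succ' (fun i => y ^ i) n'
    rw [geom_sum_eq_zero_of_root hy1 hyn, pow_zero] at h2
    linear_combination -h2
  rw [hsum]
  ring

lemma dvec_inv (n : ℕ) (q ψ : ℂ) :
    ∀ j, (dvec n q ψ j)⁻¹ = dvec n q⁻¹ ψ⁻¹ j := by
  intro j
  unfold dvec
  split_ifs
  · simp
  · rw [mul_inv, inv_pow]
end Eigen

section TraceLemmas

lemma Cmat_pow_trace_good (n : ℕ) (hn : 2 ≤ n) (k : ℕ) (hk : ¬ n ∣ k) (q : ℂ)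
    (hq : q ^ n ≠ 1) : ((Cmat n q) ^ k).trace = 1 - q ^ k := by
  obtain ⟨ψ, hψ⟩ : ∃ ψ : ℂ, IsPrimitiveRoot ψ n :=
    ⟨_, Complex.isPrimitiveRoot_exp n (by omega)⟩
  have hV := Vmat_det_isUnit n q ψ hψ hq
  have h := Cmat_mul_Vmat n hn q ψ hψ
  have ht := (conj_pow_trace (Cmat n q) (Vmat n q ψ) _ hV h k).1
  rw [ht, Matrix.diagonal_pow, Matrix.trace_diagonal]
  rw [Finset.sum_congr rfl (fun j _ => Pi.pow_apply (dvec n q ψ) k j)]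
  exact sum_dvec_pow n hn k hk q ψ hψ

lemma Cmat_inv_pow_trace_good (n : ℕ) (hn : 2 ≤ n) (k : ℕ) (hk : ¬ n ∣ k) (q : ℂ)
    (hq0 : q ≠ 0) (hq : q ^ n ≠ 1) :
    (((Cmat n q) ^ k)⁻¹).trace = 1 - (q ^ k)⁻¹ := by
  obtain ⟨ψ, hψ⟩ : ∃ ψ : ℂ, IsPrimitiveRoot ψ n :=
    ⟨_, Complex.isPrimitiveRoot_exp n (by omega)⟩
  have hψ0 : ψ ≠ 0 := by
    intro h
    have := hψ.pow_eq_one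
    rw [h, zero_pow (by omega : n ≠ 0)] at this
    exact zero_ne_one this
  have hdne : ∀ j, dvec n q ψ j ≠ 0 := by
    intro j
    unfold dvec
    split_ifs
    · exact one_ne_zero
    · exact mul_ne_zero hq0 (pow_ne_zero _ hψ0)
  have hV := Vmat_det_isUnit n q ψ hψ hq
  have h := Cmat_mul_Vmat n hn q ψ hψ
  have ht := (conj_pow_trace (Cmat n q) (Vmat n q ψ) _ hV h k).2
  rw [ht]
  have hdinv : ((Matrix.diagonal (dvec n q ψ)) ^ k)⁻¹ =
      Matrix.diagonal (fun j => (dvec n q⁻¹ ψ⁻¹ j) ^ k) := by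
    rw [Matrix.diagonal_pow]
    apply Matrix.inv_eq_right_inv
    have hfun : (fun i => (dvec n q ψ ^ k) i * dvec n q⁻¹ ψ⁻¹ i ^ k) = fun _ => (1 : ℂ) := by
      funext i
      rw [Pi.pow_apply, ← dvec_inv, ← mul_pow, mul_inv_cancel₀ (hdne i), one_pow]
    rw [Matrix.diagonal_mul_diagonal, hfun, Matrix.diagonal_one]
  rw [hdinv, Matrix.trace_diagonal, sum_dvec_pow n hn k hk q⁻¹ ψ⁻¹ hψ.inv, inv_pow]

lemma eval_trace {n : ℕ} (M : Matrix (Fin n) (Fin n) ℂ[X]) (q : ℂ) :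
    (M.trace).eval q = (M.map (Polynomial.eval q)).trace := by
  simp [Matrix.trace, Matrix.diag, Polynomial.eval_finset_sum, Matrix.map_apply]

lemma map_Cmat (n : ℕ) (q : ℂ) :
    (Cmat n (Polynomial.X : ℂ[X])).map (Polynomial.eval q) = Cmat n q := by
  ext j k
  simp only [Cmat, Matrix.map_apply, Matrix.of_apply]
  split_ifs <;> simp

lemma map_Cmat_pow (n k : ℕ) (q : ℂ) :
    ((Cmat n (Polynomial.X : ℂ[X])) ^ k).map (Polynomial.eval q) = (Cmat n q) ^ k := by
  have h := map_pow ((Polynomial.evalRingHom q).mapMatrix)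
    (Cmat n (Polynomial.X : ℂ[X])) k
  simp only [RingHom.mapMatrix_apply, Polynomial.coe_evalRingHom] at h
  rw [h, map_Cmat]

lemma good_set_infinite (n : ℕ) (hn : 1 ≤ n) :
    {x : ℂ | x ≠ 0 ∧ x ^ n ≠ 1}.Infinite := by
  have hfin : ({x : ℂ | x = 0 ∨ x ^ n = 1}).Finite := by
    apply Set.Finite.subset
      (Polynomial.finite_setOf_isRoot
        (p := Polynomial.X ^ (n + 1) - Polynomial.X) ?_)
    · intro x hx
      rcases hx with rfl | hx
      · simp [Polynomial.IsRoot]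
      · simp only [Polynomial.IsRoot, Polynomial.eval_sub, Polynomial.eval_pow,
          Polynomial.eval_X, Set.mem_setOf_eq]
        rw [pow_succ, hx]
        ring
    · intro h
      have h1 : (Polynomial.X ^ (n + 1) : ℂ[X]) = Polynomial.X := sub_eq_zero.mp h
      have h2 := congrArg Polynomial.natDegree h1
      rw [Polynomial.natDegree_X_pow, Polynomial.natDegree_X] at h2
      omega
  have : {x : ℂ | x ≠ 0 ∧ x ^ n ≠ 1} = {x : ℂ | x = 0 ∨ x ^ n = 1}ᶜ := by
    ext x; simp [not_or]
  rw [this]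
  exact hfin.infinite_compl

end TraceLemmas

section Det

lemma Cmat_det (n' : ℕ) (q : ℂ) :
    (Cmat (n' + 1) q).det = (-1) ^ n' * q ^ n' := by
  have h := Matrix.det_permute (finRotate (n' + 1)) (Cmat (n' + 1) q)
  have hval : ∀ i : Fin (n' + 1),
      ((finRotate (n' + 1)) i : ℕ) = if (i : ℕ) = n' then 0 else (i : ℕ) + 1 := by
    intro i
    rw [finRotate_succ_apply, Fin.val_add_one]
    by_cases hi : i = Fin.last n'
    · rw [if_pos hi, if_pos (show (i : ℕ) = n' by rw [hi]; rfl)]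
    · rw [if_neg hi, if_neg (show ¬ (i : ℕ) = n' from fun hc => hi (Fin.ext hc))]
  have hCapp : ∀ i j : Fin (n' + 1),
      ((Cmat (n' + 1) q).submatrix (⇑(finRotate (n' + 1))) id) i j =
      if (if (i : ℕ) = n' then 0 else (i : ℕ) + 1) = 0
        then (if (j : ℕ) = n' + 1 - 1 then 1 else 1 - q)
        else if (j : ℕ) + 1 = (if (i : ℕ) = n' then 0 else (i : ℕ) + 1) then q else 0 := by
    intro i j
    rw [Matrix.submatrix_apply, id_eq]
    rw [show Cmat (n' + 1) q (finRotate (n' + 1) i) j =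
      (if ((finRotate (n' + 1) i : ℕ)) = 0
        then (if (j : ℕ) = n' + 1 - 1 then 1 else 1 - q)
        else if (j : ℕ) + 1 = ((finRotate (n' + 1) i : ℕ)) then q else 0) from rfl]
    rw [hval i]
  have hdiag : ∀ i : Fin (n' + 1),
      ((Cmat (n' + 1) q).submatrix (⇑(finRotate (n' + 1))) id) i i
        = if (i : ℕ) = n' then 1 else q := by
    intro i
    rw [hCapp i i]
    by_cases hi : (i : ℕ) = n'
    · simp [hi]
    · simp [hi]
  have htri : ((Cmat (n' + 1) q).submatrix (⇑(finRotate (n' + 1))) id).BlockTriangular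
      OrderDual.toDual := by
    intro i j hij
    have hij' : (i : ℕ) < (j : ℕ) := hij
    have hi : ¬ (i : ℕ) = n' := by have := j.isLt; omega
    rw [hCapp i j, if_neg hi, if_neg (by omega), if_neg (by omega)]
  have hN : ((Cmat (n' + 1) q).submatrix (⇑(finRotate (n' + 1))) id).det = q ^ n' := by
    rw [Matrix.det_of_lowerTriangular _ htri]
    rw [Finset.prod_congr rfl (fun i _ => hdiag i)]
    rw [Fin.prod_univ_castSucc]
    have h1 : ∀ i : Fin n',
        (if ((Fin.castSucc i : Fin (n' + 1)) : ℕ) = n' then (1 : ℂ) else q) = q := by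
      intro i
      rw [if_neg (by have := i.isLt; simp only [Fin.coe_castSucc]; omega)]
    rw [Finset.prod_congr rfl (fun i _ => h1 i), Finset.prod_const,
      if_pos (by simp), mul_one]
    simp
  rw [hN, sign_finRotate] at h
  have h' : q ^ n' = (-1 : ℂ) ^ n' * (Cmat (n' + 1) q).det := by
    rw [h]
    norm_num
  rcases Nat.even_or_odd n' with he | ho
  · rw [he.neg_one_pow] at h' ⊢
    rw [one_mul] at h' ⊢
    exact h'.symm
  · rw [ho.neg_one_pow] at h' ⊢
    have hd : (Cmat (n' + 1) q).det = -(q ^ n') := by linear_combination h'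
    rw [hd]
    ring

end Det

section Final

lemma Cmat_pow_trace (n : ℕ) (hn : 2 ≤ n) (k : ℕ) (hk : ¬ n ∣ k) (q : ℂ) :
    ((Cmat n q) ^ k).trace = 1 - q ^ k := by
  have key : ((Cmat n (Polynomial.X : ℂ[X])) ^ k).trace = 1 - Polynomial.X ^ k := by
    apply Polynomial.eq_of_infinite_eval_eq
    apply Set.Infinite.mono (s := {x : ℂ | x ≠ 0 ∧ x ^ n ≠ 1}) ?_ (good_set_infinite n (by omega))
    · intro x hx
      obtain ⟨hx0, hxn⟩ := hx
      simp only [Set.mem_setOf_eq]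
      rw [eval_trace, map_Cmat_pow, Cmat_pow_trace_good n hn k hk x hxn]
      simp
  have h := congrArg (Polynomial.eval q) key
  rw [eval_trace, map_Cmat_pow] at h
  simpa using h

lemma Cmat_inv_pow_trace (n : ℕ) (hn : 2 ≤ n) (k : ℕ) (hk : ¬ n ∣ k) (q : ℂ)
    (hq0 : q ≠ 0) : (((Cmat n q) ^ k)⁻¹).trace = 1 - (q ^ k)⁻¹ := by
  have hle : k ≤ (n - 1) * k := by
    calc k = 1 * k := (one_mul k).symm
      _ ≤ (n - 1) * k := Nat.mul_le_mul_right k (by omega)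
  have hdet : ∀ x : ℂ, ((Cmat n x) ^ k).det = ((-1 : ℂ) ^ (n - 1) * x ^ (n - 1)) ^ k := by
    intro x
    rw [Matrix.det_pow]
    obtain ⟨n', hn'⟩ : ∃ n', n = n' + 1 := ⟨n - 1, by omega⟩
    subst hn'
    rw [Cmat_det]
    norm_num
  have htr : ∀ x : ℂ, (((Cmat n x) ^ k)⁻¹).trace
      = Ring.inverse (((Cmat n x) ^ k).det) * ((Cmat n x) ^ k).adjugate.trace := by
    intro x
    rw [Matrix.inv_def, Matrix.trace_smul, smul_eq_mul]
  set gP : ℂ[X] := ((Cmat n (Polynomial.X : ℂ[X])) ^ k).adjugate.trace with hgP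
  have hg_eval : ∀ x : ℂ, gP.eval x = ((Cmat n x) ^ k).adjugate.trace := by
    intro x
    rw [hgP, eval_trace]
    congr 1
    calc ((Cmat n (Polynomial.X : ℂ[X])) ^ k).adjugate.map (Polynomial.eval x)
        = ((Cmat n (Polynomial.X : ℂ[X])) ^ k).adjugate.map (Polynomial.evalRingHom x) := rfl
      _ = (((Cmat n (Polynomial.X : ℂ[X])) ^ k).map (Polynomial.evalRingHom x)).adjugate := by
          have hma := (Polynomial.evalRingHom x).map_adjugate ((Cmat n (Polynomial.X : ℂ[X])) ^ k)
          simp only [RingHom.mapMatrix_apply] at hma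
          exact hma
      _ = ((Cmat n x) ^ k).adjugate := by
          rw [show (((Cmat n (Polynomial.X : ℂ[X])) ^ k).map (Polynomial.evalRingHom x))
            = ((Cmat n (Polynomial.X : ℂ[X])) ^ k).map (Polynomial.eval x) from rfl,
            map_Cmat_pow]
  have hdet0 : ∀ x : ℂ, x ≠ 0 → ((-1 : ℂ) ^ (n - 1) * x ^ (n - 1)) ^ k ≠ 0 := by
    intro x hx
    apply pow_ne_zero
    exact mul_ne_zero (pow_ne_zero _ (by norm_num)) (pow_ne_zero _ hx)
  have hgid : gP = Polynomial.C ((-1 : ℂ) ^ ((n - 1) * k)) *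
      (Polynomial.X ^ ((n - 1) * k) - Polynomial.X ^ ((n - 1) * k - k)) := by
    apply Polynomial.eq_of_infinite_eval_eq
    apply Set.Infinite.mono (s := {x : ℂ | x ≠ 0 ∧ x ^ n ≠ 1}) ?_ (good_set_infinite n (by omega))
    intro x hx
    obtain ⟨hx0, hxn⟩ := hx
    simp only [Set.mem_setOf_eq]
    have h1 := htr x
    rw [Cmat_inv_pow_trace_good n hn k hk x hx0 hxn, hdet x, Ring.inverse_eq_inv] at h1
    have h2 : ((Cmat n x) ^ k).adjugate.trace
        = ((-1 : ℂ) ^ (n - 1) * x ^ (n - 1)) ^ k * (1 - (x ^ k)⁻¹) := by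
      have h3 := congrArg (fun t => ((-1 : ℂ) ^ (n - 1) * x ^ (n - 1)) ^ k * t) h1
      rw [← mul_assoc, mul_inv_cancel₀ (hdet0 x hx0), one_mul] at h3
      exact h3.symm
    rw [hg_eval, h2]
    simp only [Polynomial.eval_mul, Polynomial.eval_C, Polynomial.eval_sub,
      Polynomial.eval_pow, Polynomial.eval_X]
    rw [mul_pow, ← pow_mul, ← pow_mul, pow_sub₀ x hx0 hle]
    have hxk : x ^ k ≠ 0 := pow_ne_zero _ hx0
    field_simp
  -- conclude for arbitrary q ≠ 0
  have h1 := htr q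
  rw [hdet q, Ring.inverse_eq_inv] at h1
  have h2 := hg_eval q
  rw [hgid] at h2
  rw [← h2] at h1
  simp only [Polynomial.eval_mul, Polynomial.eval_C, Polynomial.eval_sub,
    Polynomial.eval_pow, Polynomial.eval_X] at h1
  rw [h1, mul_pow, ← pow_mul, ← pow_mul, pow_sub₀ q hq0 hle]
  have hqk : q ^ k ≠ 0 := pow_ne_zero _ hq0
  have hm1 : ((-1 : ℂ)) ^ ((n - 1) * k) ≠ 0 := pow_ne_zero _ (by norm_num)
  have hqnk : q ^ ((n - 1) * k) ≠ 0 := pow_ne_zero _ hq0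
  field_simp

end Final

end Aux

/-- **Trace of the torus type braid matrix.** For `gcd(n, |m|) = 1`,
`tr(T_{n,m}) = 1 − q^m`. -/
theorem torus_braid_trace (n : ℕ) (hn : 2 ≤ n) (m : ℤ) (hnm : Nat.Coprime n m.natAbs)
    (q : ℂ) (hq : q ≠ 0) :
    (torusBurau n q m).trace = 1 - q ^ m := by
  have hm0 : m ≠ 0 := by
    intro h
    rw [h] at hnm
    simp only [Int.natAbs_zero, Nat.coprime_zero_right] at hnm
    omega
  have hndk : ¬ n ∣ m.natAbs := by
    intro hd
    have h1 := Nat.Coprime.eq_one_of_dvd hnm hd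
    omega
  have hbp : burauProd n q = Cmat n q := burauProd_eq n (by omega) q
  rcases Int.natAbs_eq m with hm | hm
  · rw [show torusBurau n q m = burauProd n q ^ m from rfl, hbp, hm]
    rw [zpow_natCast, zpow_natCast]
    exact Cmat_pow_trace n hn m.natAbs hndk q
  · rw [show torusBurau n q m = burauProd n q ^ m from rfl, hbp, hm]
    rw [Matrix.zpow_neg_natCast, _root_.zpow_neg, zpow_natCast]
    exact Cmat_inv_pow_trace n hn m.natAbs hndk q hq
end
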